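/- arXiv:2408.00750 — 9 statements merged into one kernel-verified Lean document; each statement's English description precedes it below -/
import Mathlib

section
/- Let T be a polynomial of degree t ≥ 1 over ℤ/p^αℤ whose constant coefficient and leading coefficient are both units (nonzero mod p). Write the power series 1/T = Σ_{n≥0} a(n) z^n. Then the sequence a(n) is purely periodic, and if m is its period length, then a(m − i) = 0 for all i with 1 ≤ i ≤ t − 1, while a(m − t) is a unit (in particular nonzero). -/
open Polynomial

lemma degLemma {R : Type*} [CommRing R] [Nontrivial R] {T B : R[X]} {t M : ℕ}
    (ht : T.natDegree = t) (hlead : IsUnit T.leadingCoeff) (hM : 0 < M)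
    (h : T * B = 1 - X ^ M) :
    B.natDegree = M - t ∧ t ≤ M ∧ IsUnit B.leadingCoeff := by
  have hrhs : (1 - X ^ M : R[X]) = -(X ^ M - C 1) := by simp [neg_sub]
  have hdeg : (1 - X ^ M : R[X]).natDegree = M := by
    rw [hrhs, natDegree_neg, natDegree_X_pow_sub_C]
  have hB0 : B ≠ 0 := by
    rintro rfl
    rw [mul_zero] at h
    have := congrArg (fun q => Polynomial.coeff q 0) h
    simp [coeff_one, coeff_X_pow, hM.ne] at this
  have hBl : B.leadingCoeff ≠ 0 := leadingCoeff_ne_zero.mpr hB0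
  have hprod : T.leadingCoeff * B.leadingCoeff ≠ 0 := fun hc => by
    obtain ⟨u, hu⟩ := hlead
    have : B.leadingCoeff = 0 := by
      have := congrArg (fun x => (↑u⁻¹ : R) * x) hc
      simpa [← hu, ← mul_assoc] using this
    exact hBl this
  have hnd : (T * B).natDegree = t + B.natDegree := by
    rw [natDegree_mul' hprod, ht]
  rw [h, hdeg] at hnd
  have hlc : T.leadingCoeff * B.leadingCoeff = -1 := by
    have := leadingCoeff_mul' hprod
    rw [h] at this
    rw [← this, hrhs, leadingCoeff_neg, leadingCoeff, natDegree_X_pow_sub_C]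
    simp [coeff_one, coeff_X_pow, coeff_C, coeff_sub, hM.ne']
  refine ⟨by omega, by omega, ?_⟩
  exact IsUnit.of_mul_eq_one (-T.leadingCoeff)
    (by rw [mul_comm] at hlc; rw [mul_neg, hlc, neg_neg])

/-- Let `T` be a polynomial of degree `t ≥ 1` over `ℤ/p^αℤ` whose constant and leading
coefficients are units, and write `1/T = Σ a(n) zⁿ` (i.e. `F * T = 1` in power series).
Then `a` is purely periodic, and if `m` is its (minimal) period length, then
`a(m - i) = 0` for `1 ≤ i ≤ t - 1`, while `a(m - t)` is a unit. -/
theorem stmt_3 (p : ℕ) [Fact p.Prime] (α : ℕ) (hα : 1 ≤ α)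
    (T : Polynomial (ZMod (p ^ α))) (t : ℕ) (ht : T.natDegree = t) (ht1 : 1 ≤ t)
    (h0 : IsUnit (T.coeff 0)) (hlead : IsUnit T.leadingCoeff)
    (F : PowerSeries (ZMod (p ^ α))) (hF : F * (T : PowerSeries (ZMod (p ^ α))) = 1)
    (a : ℕ → ZMod (p ^ α)) (ha : ∀ n, a n = PowerSeries.coeff n F) :
    ∃ m : ℕ, 0 < m ∧ (∀ n, a (n + m) = a n) ∧
      (∀ m', 0 < m' → (∀ n, a (n + m') = a n) → m ≤ m') ∧
      (∀ i, 1 ≤ i → i ≤ t - 1 → a (m - i) = 0) ∧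
      IsUnit (a (m - t)) := by
  have hp : p.Prime := Fact.out
  haveI : NeZero (p ^ α) := ⟨pow_ne_zero _ hp.pos.ne'⟩
  haveI : Fact (1 < p ^ α) := ⟨Nat.one_lt_pow (by omega) hp.one_lt⟩
  haveI : Nontrivial (ZMod (p ^ α)) := ZMod.nontrivial _
  -- general periodicity from divisibility
  have periodOf : ∀ M : ℕ, 0 < M → ∀ B : (ZMod (p ^ α))[X], T * B = 1 - X ^ M →
      ∀ n, a (n + M) = a n := by
    intro M hM B hB n
    have hdeg := (degLemma ht hlead hM hB).1
    have htM := (degLemma ht hlead hM hB).2.1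
    have hcast : F * ((1 - X ^ M : (ZMod (p ^ α))[X]) : PowerSeries (ZMod (p ^ α)))
        = (B : PowerSeries (ZMod (p ^ α))) := by
      rw [← hB]
      push_cast
      rw [← mul_assoc, hF, one_mul]
    have hcoeff := congrArg (fun G => PowerSeries.coeff (n + M) G) hcast
    simp only [Polynomial.coe_sub, Polynomial.coe_one, Polynomial.coe_pow, Polynomial.coe_X,
      mul_sub, mul_one, map_sub] at hcoeff
    rw [PowerSeries.coeff_mul_X_pow, Polynomial.coeff_coe] at hcoeff
    have hBz : B.coeff (n + M) = 0 := coeff_eq_zero_of_natDegree_lt (by omega)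
    rw [hBz] at hcoeff
    have h2 := sub_eq_zero.mp hcoeff
    rw [ha n, ha (n + M), h2]
  -- existence of some period via AdjoinRoot
  obtain ⟨u, hu⟩ := id hlead
  obtain ⟨T', hT'⟩ : ∃ T', T' = C ((↑u⁻¹ : (ZMod (p ^ α)))) * T := ⟨_, rfl⟩
  have hT'monic : T'.Monic := hT' ▸ monic_C_mul_of_mul_leadingCoeff_eq_one (by
    rw [← hu]; exact u.inv_mul)
  have pb := AdjoinRoot.powerBasis' hT'monic
  haveI : Module.Finite (ZMod (p ^ α)) (AdjoinRoot T') := Module.Finite.of_basis pb.basis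
  haveI : Finite (AdjoinRoot T') := Module.finite_of_finite (ZMod (p ^ α))
  have hrootunit : IsUnit (AdjoinRoot.root T') := by
    have hc0 : IsUnit (T'.coeff 0) := by
      rw [hT', coeff_C_mul]
      exact (Units.isUnit u⁻¹).mul h0
    obtain ⟨v, hv⟩ := hc0
    refine IsUnit.of_mul_eq_one (AdjoinRoot.mk T' (C (-(↑v⁻¹ : (ZMod (p ^ α)))) * divX T')) ?_
    have key : (X : (ZMod (p ^ α))[X]) * (C (-(↑v⁻¹ : (ZMod (p ^ α)))) * divX T') - 1
        = T' * (-(C ((↑v⁻¹ : (ZMod (p ^ α)))))) := by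
      have h1 : (X : (ZMod (p ^ α))[X]) * divX T' + C (T'.coeff 0) = T' := X_mul_divX_add T'
      have h2 : (X : (ZMod (p ^ α))[X]) * divX T' = T' - C (↑v : (ZMod (p ^ α))) := by
        rw [eq_sub_iff_add_eq, hv]; exact h1
      have h3 : C ((↑v⁻¹ : (ZMod (p ^ α)))) * C ((↑v : (ZMod (p ^ α)))) = 1 := by
        rw [← C_mul, Units.inv_mul, C_1]
      rw [map_neg]
      linear_combination (-(C ((↑v⁻¹ : (ZMod (p ^ α)))))) * h2 + h3
    rw [← AdjoinRoot.mk_X, ← map_mul]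
    have hz : (AdjoinRoot.mk T') (X * (C (-(↑v⁻¹ : (ZMod (p ^ α)))) * divX T') - 1) = 0 := by
      rw [AdjoinRoot.mk_eq_zero, key]
      exact Dvd.intro _ rfl
    rw [map_sub, map_one, sub_eq_zero] at hz
    rw [hz]
  obtain ⟨w, hw⟩ := hrootunit
  have hMpos : 0 < orderOf w := orderOf_pos w
  have hwM : w ^ orderOf w = 1 := pow_orderOf_eq_one w
  have hrootM : (AdjoinRoot.root T') ^ orderOf w = 1 := by
    rw [← hw, ← Units.val_pow_eq_pow_val, hwM, Units.val_one]
  have hdvd' : T' ∣ X ^ orderOf w - 1 := by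
    rw [← AdjoinRoot.mk_eq_zero, map_sub, map_pow, AdjoinRoot.mk_X, map_one, hrootM, sub_self]
  have hdvd : T ∣ X ^ orderOf w - 1 := by
    refine dvd_trans ⟨C (↑u⁻¹ : (ZMod (p ^ α))), ?_⟩ hdvd'
    rw [hT', mul_comm]
  obtain ⟨A0, hA0⟩ := hdvd
  have hper0 : ∀ n, a (n + orderOf w) = a n := by
    refine periodOf (orderOf w) hMpos (-A0) ?_
    rw [mul_neg, ← hA0]; ring
  -- minimal period
  have hex : ∃ k, 0 < k ∧ ∀ n, a (n + k) = a n := ⟨orderOf w, hMpos, hper0⟩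
  classical
  obtain ⟨hm0, hper⟩ := Nat.find_spec hex
  set m := Nat.find hex with hmdef
  have hmin : ∀ m', 0 < m' → (∀ n, a (n + m') = a n) → m ≤ m' := fun m' h1 h2 =>
    Nat.find_min' hex ⟨h1, h2⟩
  -- the polynomial of one period
  obtain ⟨A, hAdef⟩ : ∃ A, A = ∑ n ∈ Finset.range m, C (a n) * X ^ n := ⟨_, rfl⟩
  have hAcoeff : ∀ k, A.coeff k = if k < m then a k else 0 := by
    intro k
    rw [hAdef, finset_sum_coeff]
    by_cases hk : k < m
    · rw [if_pos hk]
      rw [Finset.sum_eq_single k (fun b _ hb => by simp [coeff_X_pow, Ne.symm hb])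
        (fun h => absurd (Finset.mem_range.mpr hk) h)]
      simp [coeff_X_pow]
    · rw [if_neg hk]
      apply Finset.sum_eq_zero
      intro n hn
      have hnk : k ≠ n := by rw [Finset.mem_range] at hn; omega
      simp [coeff_X_pow, hnk]
  have hcast : F * ((1 - X ^ m : (ZMod (p ^ α))[X]) : PowerSeries (ZMod (p ^ α)))
      = (A : PowerSeries (ZMod (p ^ α))) := by
    ext k
    simp only [Polynomial.coe_sub, Polynomial.coe_one, Polynomial.coe_pow, Polynomial.coe_X,
      mul_sub, mul_one, map_sub, Polynomial.coeff_coe]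
    rw [PowerSeries.coeff_mul_X_pow', hAcoeff k, ← ha k]
    by_cases hk : m ≤ k
    · rw [if_pos hk, if_neg (by omega)]
      have h2 : a (k - m + m) = a (k - m) := hper (k - m)
      rw [Nat.sub_add_cancel hk] at h2
      rw [← ha (k - m), h2, sub_self]
    · rw [if_neg hk, if_pos (by omega), sub_zero]
  have hTA : T * A = 1 - X ^ m := by
    have hcast' : F * (1 - (PowerSeries.X : PowerSeries (ZMod (p ^ α))) ^ m)
        = (A : PowerSeries (ZMod (p ^ α))) := by
      rw [← hcast]; push_cast; ring
    have hco : ((T * A : (ZMod (p ^ α))[X]) : PowerSeries (ZMod (p ^ α)))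
        = ((1 - X ^ m : (ZMod (p ^ α))[X]) : PowerSeries (ZMod (p ^ α))) := by
      push_cast
      rw [← hcast']
      calc (T : PowerSeries (ZMod (p ^ α))) * (F * (1 - PowerSeries.X ^ m))
          = (F * (T : PowerSeries (ZMod (p ^ α)))) * (1 - PowerSeries.X ^ m) := by ring
        _ = 1 - PowerSeries.X ^ m := by rw [hF, one_mul]
    exact Polynomial.coe_injective _ hco
  obtain ⟨hAdeg, htm, hAlead⟩ := degLemma ht hlead hm0 hTA
  refine ⟨m, hm0, hper, hmin, ?_, ?_⟩
  · intro i hi1 hit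
    have h1 : m - i < m := by omega
    have h2 : A.natDegree < m - i := by omega
    have h3 := hAcoeff (m - i)
    rw [if_pos h1] at h3
    rw [← h3, coeff_eq_zero_of_natDegree_lt h2]
  · have h1 : m - t < m := by omega
    have h3 := hAcoeff (m - t)
    rw [if_pos h1] at h3
    rw [← h3, ← hAdeg]
    exact hAlead
end

section
/- Let T ∈ (ℤ/p^αℤ)[z] have degree t ≥ 1 with unit constant and leading coefficients, and let 0 ≤ i ≤ t − 1. Then the coefficient sequence of the Laurent series 1/(z^{-i} T) (i.e., z^i/T) is purely periodic, its period begins with i zeros and ends with exactly t − 1 − i zeros. -/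
open Polynomial Finset

section Aux

variable {R : Type*} [CommRing R]

lemma aux_rec (T : R[X]) (t : ℕ) (ht : T.natDegree = t) (ht1 : 1 ≤ t)
    (F : PowerSeries R) (hF : F * (T : PowerSeries R) = 1)
    (a : ℕ → R) (ha : ∀ n, a n = PowerSeries.coeff n F) (n : ℕ) :
    ∑ j ∈ Finset.range (t + 1), T.coeff j * a (n + t - j) = 0 := by
  have h1 : (PowerSeries.coeff (n + t)) ((T : PowerSeries R) * F) = 0 := by
    rw [mul_comm, hF]
    have : n + t ≠ 0 := by omega
    simp [PowerSeries.coeff_one, this]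
    omega
  rw [PowerSeries.coeff_mul, Finset.Nat.sum_antidiagonal_eq_sum_range_succ_mk] at h1
  have h2 : ∑ k ∈ Finset.range (n + t + 1), T.coeff k * a (n + t - k) = 0 := by
    rw [← h1]
    refine Finset.sum_congr rfl fun k hk => ?_
    rw [Polynomial.coeff_coe, ha]
  rw [← h2]
  refine Finset.sum_subset (Finset.range_subset_range.2 (by omega)) fun k hk hk' => ?_
  have : T.natDegree < k := by
    simp only [Finset.mem_range] at hk hk'
    omega
  rw [Polynomial.coeff_eq_zero_of_natDegree_lt this, zero_mul]

/-- Forward determinism. -/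
lemma aux_fwd (T : R[X]) (t : ℕ) (ht : T.natDegree = t) (ht1 : 1 ≤ t)
    (h0 : IsUnit (T.coeff 0))
    (F : PowerSeries R) (hF : F * (T : PowerSeries R) = 1)
    (a : ℕ → R) (ha : ∀ n, a n = PowerSeries.coeff n F)
    (n m : ℕ) (h : ∀ j, j < t → a (n + j) = a (m + j)) :
    a (n + t) = a (m + t) := by
  have h1 := aux_rec T t ht ht1 F hF a ha n
  have h2 := aux_rec T t ht ht1 F hF a ha m
  rw [Finset.sum_range_succ'] at h1 h2
  have hs : ∑ j ∈ Finset.range t, T.coeff (j + 1) * a (n + t - (j + 1)) =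
      ∑ j ∈ Finset.range t, T.coeff (j + 1) * a (m + t - (j + 1)) := by
    refine Finset.sum_congr rfl fun j hj => ?_
    simp only [Finset.mem_range] at hj
    rw [show n + t - (j + 1) = n + (t - (j + 1)) by omega,
      show m + t - (j + 1) = m + (t - (j + 1)) by omega, h _ (by omega)]
  have h3 : T.coeff 0 * a (n + t) = T.coeff 0 * a (m + t) := by
    have := h1.trans h2.symm
    rw [hs] at this
    simpa using this
  exact h0.mul_left_cancel h3

/-- Backward determinism. -/
lemma aux_bwd (T : R[X]) (t : ℕ) (ht : T.natDegree = t) (ht1 : 1 ≤ t)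
    (hlead : IsUnit T.leadingCoeff)
    (F : PowerSeries R) (hF : F * (T : PowerSeries R) = 1)
    (a : ℕ → R) (ha : ∀ n, a n = PowerSeries.coeff n F)
    (n m : ℕ) (h : ∀ j, j < t → a (n + 1 + j) = a (m + 1 + j)) :
    a n = a m := by
  have h1 := aux_rec T t ht ht1 F hF a ha n
  have h2 := aux_rec T t ht ht1 F hF a ha m
  rw [Finset.sum_range_succ] at h1 h2
  have hs : ∑ j ∈ Finset.range t, T.coeff j * a (n + t - j) =
      ∑ j ∈ Finset.range t, T.coeff j * a (m + t - j) := by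
    refine Finset.sum_congr rfl fun j hj => ?_
    simp only [Finset.mem_range] at hj
    rw [show n + t - j = n + 1 + (t - 1 - j) by omega,
      show m + t - j = m + 1 + (t - 1 - j) by omega, h _ (by omega)]
  have h3 : T.coeff t * a n = T.coeff t * a m := by
    have := h1.trans h2.symm
    rw [hs] at this
    rw [show n + t - t = n by omega, show m + t - t = m by omega] at this
    exact add_left_cancel this
  have hu : IsUnit (T.coeff t) := by rwa [Polynomial.leadingCoeff, ht] at hlead
  exact hu.mul_left_cancel h3

end Aux

section Aux2

variable {R : Type*} [CommRing R]

lemma aux_prop (T : R[X]) (t : ℕ) (ht : T.natDegree = t) (ht1 : 1 ≤ t)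
    (h0 : IsUnit (T.coeff 0))
    (F : PowerSeries R) (hF : F * (T : PowerSeries R) = 1)
    (a : ℕ → R) (ha : ∀ n, a n = PowerSeries.coeff n F)
    (n m : ℕ) (h : ∀ j, j < t → a (n + j) = a (m + j)) :
    ∀ k j, j < t → a (n + k + j) = a (m + k + j) := by
  intro k
  induction k with
  | zero => simpa using h
  | succ k ih =>
    intro j hj
    rcases Nat.lt_or_ge (j + 1) t with hc | hc
    · rw [show n + (k + 1) + j = n + k + (j + 1) by omega,
        show m + (k + 1) + j = m + k + (j + 1) by omega]
      exact ih (j + 1) hc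
    · have hjt : j + 1 = t := by omega
      rw [show n + (k + 1) + j = n + k + t by omega,
        show m + (k + 1) + j = m + k + t by omega]
      exact aux_fwd T t ht ht1 h0 F hF a ha (n + k) (m + k) ih

lemma aux_back (T : R[X]) (t : ℕ) (ht : T.natDegree = t) (ht1 : 1 ≤ t)
    (hlead : IsUnit T.leadingCoeff)
    (F : PowerSeries R) (hF : F * (T : PowerSeries R) = 1)
    (a : ℕ → R) (ha : ∀ n, a n = PowerSeries.coeff n F) (N : ℕ) :
    ∀ c, (∀ j, j < t → a (c + j) = a (c + N + j)) → ∀ j, j < t → a j = a (N + j) := by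
  intro c
  induction c with
  | zero => intro h j hj; simpa [Nat.add_comm] using h j hj
  | succ c ih =>
    intro h
    refine ih fun j hj => ?_
    rcases Nat.eq_zero_or_pos j with rfl | hpos
    · have hb : ∀ j, j < t → a (c + 1 + j) = a (c + N + 1 + j) := by
        intro j hj
        rw [show c + N + 1 + j = c + 1 + N + j by omega]
        exact h j hj
      simpa using aux_bwd T t ht ht1 hlead F hF a ha c (c + N) hb
    · rw [show c + j = c + 1 + (j - 1) by omega,
        show c + N + j = c + 1 + N + (j - 1) by omega]
      exact h (j - 1) (by omega)

lemma aux_exists_period [Finite R] (T : R[X]) (t : ℕ) (ht : T.natDegree = t) (ht1 : 1 ≤ t)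
    (h0 : IsUnit (T.coeff 0)) (hlead : IsUnit T.leadingCoeff)
    (F : PowerSeries R) (hF : F * (T : PowerSeries R) = 1)
    (a : ℕ → R) (ha : ∀ n, a n = PowerSeries.coeff n F) :
    ∃ N, 0 < N ∧ ∀ n, a (n + N) = a n := by
  obtain ⟨k, l, hkl, hs⟩ := Finite.exists_ne_map_eq_of_infinite
    (fun n : ℕ => fun j : Fin t => a (n + j))
  wlog hlt : k < l generalizing k l
  · exact this l k hkl.symm hs.symm (by omega)
  set N := l - k with hN
  have hsk : ∀ j, j < t → a (k + j) = a (k + N + j) := by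
    intro j hj
    have := congrFun hs ⟨j, hj⟩
    simpa [show k + N = l by omega] using this
  have hbase := aux_back T t ht ht1 hlead F hF a ha N k hsk
  have hbase' : ∀ j, j < t → a (0 + j) = a (N + j) := by simpa using hbase
  refine ⟨N, by omega, fun n => ?_⟩
  have := aux_prop T t ht ht1 h0 F hF a ha 0 N hbase' n 0 (by omega)
  simpa [Nat.add_comm] using this.symm

lemma aux_pattern [Nontrivial R] (T : R[X]) (t : ℕ) (ht : T.natDegree = t) (ht1 : 1 ≤ t)
    (hlead : IsUnit T.leadingCoeff)
    (F : PowerSeries R) (hF : F * (T : PowerSeries R) = 1)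
    (a : ℕ → R) (ha : ∀ n, a n = PowerSeries.coeff n F)
    (m : ℕ) (hm : 0 < m) (hper : ∀ n, a (n + m) = a n) :
    t ≤ m ∧ (∀ n, m - t < n → n < m → a n = 0) ∧ IsUnit (a (m - t)) := by
  set P : R[X] := F.trunc m with hP
  have hcoe : (P : PowerSeries R) = F * (1 - (PowerSeries.X : PowerSeries R) ^ m) := by
    ext n
    rw [Polynomial.coeff_coe, PowerSeries.coeff_trunc, mul_sub, mul_one, map_sub,
      PowerSeries.coeff_mul_X_pow']
    by_cases hn : n < m
    · simp [hn, Nat.not_le.2 hn, ← ha]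
    · have hle : m ≤ n := Nat.le_of_not_lt hn
      have : a (n - m + m) = a (n - m) := hper (n - m)
      rw [show n - m + m = n by omega] at this
      simp only [hn, if_false, hle, if_true]
      rw [← ha, ← ha, this, sub_self]
  have hTP : T * P = 1 - X ^ m := by
    have : ((T * P : R[X]) : PowerSeries R) = ((1 - X ^ m : R[X]) : PowerSeries R) := by
      rw [Polynomial.coe_mul, hcoe, ← mul_assoc, mul_comm (T : PowerSeries R) _, hF, one_mul]
      rw [← Polynomial.coeToPowerSeries.ringHom_apply, map_sub, map_pow, map_one,
        Polynomial.coeToPowerSeries.ringHom_apply, Polynomial.coe_X]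
    exact_mod_cast Polynomial.coe_inj.mp this
  have hrhs_ne : (1 - X ^ m : R[X]) ≠ 0 := by
    intro hz
    have := congrArg (fun q : R[X] => q.coeff 0) hz
    simp [Polynomial.coeff_X_pow, hm.ne, hm.ne'] at this
  have hPne : P ≠ 0 := by
    intro hz
    rw [hz, mul_zero] at hTP
    exact hrhs_ne hTP.symm
  have hlc_ne : T.leadingCoeff * P.leadingCoeff ≠ 0 := by
    intro hz
    have : P.leadingCoeff = 0 := by
      have := hlead.mul_left_cancel (by rw [hz, mul_zero] : T.leadingCoeff * P.leadingCoeff = T.leadingCoeff * 0)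
      exact this
    exact hPne (Polynomial.leadingCoeff_eq_zero.mp this)
  have hdeg_rhs : (1 - X ^ m : R[X]).natDegree = m := by
    rw [show (1 - X ^ m : R[X]) = -(X ^ m - C 1) by rw [Polynomial.C_1]; ring,
      Polynomial.natDegree_neg, Polynomial.natDegree_X_pow_sub_C]
  have hdeg : t + P.natDegree = m := by
    rw [← ht, ← Polynomial.natDegree_mul' hlc_ne, hTP, hdeg_rhs]
  have htm : t ≤ m := by omega
  have hPdeg : P.natDegree = m - t := by omega
  have hlcP : IsUnit P.leadingCoeff := by
    have hcc : T.leadingCoeff * P.leadingCoeff = (1 - X ^ m : R[X]).coeff m := by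
      rw [← Polynomial.coeff_mul_degree_add_degree, hTP, ht, hPdeg,
        show t + (m - t) = m by omega]
    have hcm : (1 - X ^ m : R[X]).coeff m = -1 := by
      simp [Polynomial.coeff_X_pow, Polynomial.coeff_one, hm.ne, hm.ne']
    rw [hcm] at hcc
    exact IsUnit.of_mul_eq_one (-T.leadingCoeff) (by rw [mul_comm] at hcc; linear_combination -hcc)
  have hcoeffP : ∀ n, n < m → P.coeff n = a n := by
    intro n hn
    rw [hP, PowerSeries.coeff_trunc, if_pos hn, ← ha]
  refine ⟨htm, fun n h1 h2 => ?_, ?_⟩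
  · rw [← hcoeffP n h2]
    exact Polynomial.coeff_eq_zero_of_natDegree_lt (by omega)
  · have : a (m - t) = P.leadingCoeff := by
      rw [← hcoeffP (m - t) (by omega), Polynomial.leadingCoeff, hPdeg]
    rw [this]
    exact hlcP

end Aux2

/-- Let `T ∈ (ℤ/p^αℤ)[z]` have degree `t ≥ 1` with unit constant and leading
coefficients, write `1/T = Σ a(n) zⁿ`, and let `0 ≤ i ≤ t - 1`.  The coefficient
sequence `b` of `zⁱ/T`, given by `b(n) = a(n - i)` for `n ≥ i` and `b(n) = 0` for
`n < i`, is purely periodic; its period begins with `i` zeros and ends with exactly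
`t - 1 - i` zeros. -/
theorem stmt_5 (p : ℕ) [Fact p.Prime] (α : ℕ) (hα : 1 ≤ α)
    (T : Polynomial (ZMod (p ^ α))) (t : ℕ) (ht : T.natDegree = t) (ht1 : 1 ≤ t)
    (h0 : IsUnit (T.coeff 0)) (hlead : IsUnit T.leadingCoeff)
    (F : PowerSeries (ZMod (p ^ α))) (hF : F * (T : PowerSeries (ZMod (p ^ α))) = 1)
    (a : ℕ → ZMod (p ^ α)) (ha : ∀ n, a n = PowerSeries.coeff n F)
    (i : ℕ) (hi : i ≤ t - 1)
    (b : ℕ → ZMod (p ^ α)) (hb : ∀ n, b n = if n < i then 0 else a (n - i)) :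
    ∃ m : ℕ, 0 < m ∧ (∀ n, b (n + m) = b n) ∧
      (∀ m', 0 < m' → (∀ n, b (n + m') = b n) → m ≤ m') ∧
      (∀ j, j < i → b j = 0) ∧
      (∀ j, 1 ≤ j → j ≤ t - 1 - i → b (m - j) = 0) ∧
      b (m - (t - i)) ≠ 0 := by
  have hp2 : 2 ≤ p := (Fact.out : p.Prime).two_le
  have h1pa : 1 < p ^ α := Nat.one_lt_pow (by omega) (by omega)
  haveI : Fact (1 < p ^ α) := ⟨h1pa⟩
  haveI : NeZero (p ^ α) := ⟨by omega⟩
  obtain ⟨N, hN0, hNper⟩ := aux_exists_period T t ht ht1 h0 hlead F hF a ha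
  have b_of_a : ∀ M, 0 < M → (∀ n, a (n + M) = a n) → ∀ n, b (n + M) = b n := by
    intro M hM0 hMper n
    obtain ⟨htM, hzero, -⟩ := aux_pattern T t ht ht1 hlead F hF a ha M hM0 hMper
    rw [hb, hb]
    by_cases hn : n < i
    · rw [if_pos hn, if_neg (by omega)]
      exact hzero (n + M - i) (by omega) (by omega)
    · rw [if_neg hn, if_neg (by omega), show n + M - i = (n - i) + M by omega, hMper]
  have a_of_b : ∀ M, (∀ n, b (n + M) = b n) → ∀ n, a (n + M) = a n := by
    intro M hMper n
    have hh := hMper (n + i)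
    rw [hb, hb, if_neg (by omega), if_neg (by omega),
      show n + i + M - i = n + M by omega, show n + i - i = n by omega] at hh
    exact hh
  have hex : ∃ M, 0 < M ∧ ∀ n, b (n + M) = b n := ⟨N, hN0, b_of_a N hN0 hNper⟩
  classical
  obtain ⟨hm0, hmper⟩ := Nat.find_spec hex
  set m := Nat.find hex with hm
  have hminimal : ∀ m', 0 < m' → (∀ n, b (n + m') = b n) → m ≤ m' :=
    fun m' h1 h2 => Nat.find_min' hex ⟨h1, h2⟩
  have haper : ∀ n, a (n + m) = a n := a_of_b m hmper
  obtain ⟨htm, hzero, hunit⟩ := aux_pattern T t ht ht1 hlead F hF a ha m hm0 haper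
  refine ⟨m, hm0, hmper, hminimal, ?_, ?_, ?_⟩
  · intro j hj; rw [hb, if_pos hj]
  · intro j hj1 hj2
    rw [hb, if_neg (by omega)]
    exact hzero (m - j - i) (by omega) (by omega)
  · rw [hb, if_neg (by omega), show m - (t - i) - i = m - t by omega]
    exact hunit.ne_zero
end

section
/- Define the Cartier operator Λ_r on univariate Laurent series over ℤ/p^αℤ by Λ_r(Σ a(n) x^n) = Σ_{n ≡ r mod p} a(n) x^{(n−r)/p}. Then for all Laurent series F and G over ℤ/p^αℤ (with F a Laurent polynomial, say), Λ_r(G · F^{p^α}) = Λ_r(G) · F^{p^{α−1}}. -/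
open Finsupp in
/-- The Cartier operator `Λ_r` on Laurent polynomials: the coefficient of `xⁿ` in
`cartier p r S` is the coefficient of `x^(p*n + r)` in `S`, i.e.
`Λ_r (Σ a(n) xⁿ) = Σ_{n ≡ r mod p} a(n) x^((n - r)/p)`. -/
noncomputable def cartier {A : Type*} [CommRing A] (p : ℕ) [NeZero p] (r : ℤ)
    (S : LaurentPolynomial A) : LaurentPolynomial A :=
  AddMonoidAlgebra.ofCoeff (Finsupp.comapDomain (fun n : ℤ => (p : ℤ) * n + r) S.coeff
    (Set.injOn_of_injective (fun a b h => by
      have hp : (p : ℤ) ≠ 0 := by exact_mod_cast (NeZero.ne p)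
      have := mul_left_cancel₀ hp (by linarith [h] : (p : ℤ) * a = p * b)
      exact this)))

section CartierAux

variable {A : Type*} [CommRing A] (p : ℕ) [NeZero p] (r : ℤ)

lemma CartierAux.pr_injective : Function.Injective (fun n : ℤ => (p : ℤ) * n + r) := by
  intro a b h
  have hp : (p : ℤ) ≠ 0 := by exact_mod_cast (NeZero.ne p)
  simp only at h
  exact mul_left_cancel₀ hp (by linarith)

/-- substitution `x ↦ x^p` as a ring hom on Laurent polynomials -/
noncomputable def CartierAux.sigmaP : LaurentPolynomial A →+* LaurentPolynomial A :=
  AddMonoidAlgebra.mapDomainRingHom A (AddMonoidHom.mulLeft (p : ℤ))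

open CartierAux

omit [NeZero p] in
lemma CartierAux.sigmaP_single (a : ℤ) (b : A) :
    sigmaP p (AddMonoidAlgebra.single a b) = AddMonoidAlgebra.single ((p : ℤ) * a) b := by
  show AddMonoidAlgebra.mapDomain _ _ = _
  rw [AddMonoidAlgebra.mapDomain_single]; rfl

lemma CartierAux.cartier_add (S T : LaurentPolynomial A) :
    cartier p r (S + T) = cartier p r S + cartier p r T :=
  AddMonoidAlgebra.coeff_inj.mp (Finsupp.comapDomain_add_of_injective (pr_injective p r) S.coeff T.coeff)

lemma CartierAux.cartier_zero : cartier p r (0 : LaurentPolynomial A) = 0 := by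
  ext n; simp [cartier]

lemma CartierAux.cartier_single_hit (n : ℤ) (e : A) :
    cartier p r (AddMonoidAlgebra.single ((p : ℤ) * n + r) e) = AddMonoidAlgebra.single n e :=
  AddMonoidAlgebra.coeff_inj.mp (Finsupp.comapDomain_single (fun m : ℤ => (p : ℤ) * m + r) n e _)

lemma CartierAux.cartier_single_miss (m : ℤ) (e : A) (h : ∀ n : ℤ, (p : ℤ) * n + r ≠ m) :
    cartier p r (AddMonoidAlgebra.single m e) = 0 := by
  ext n
  show (Finsupp.single m e : ℤ →₀ A) ((p : ℤ) * n + r) = (0 : ℤ →₀ A) n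
  rw [Finsupp.single_apply, if_neg (fun hc => h n hc.symm), Finsupp.zero_apply]

lemma CartierAux.cartier_mul_sigmaP (G H : LaurentPolynomial A) :
    cartier p r (G * sigmaP p H) = cartier p r G * H := by
  induction G using AddMonoidAlgebra.induction_linear with
  | zero => rw [zero_mul, cartier_zero, zero_mul]
  | add f g hf hg => rw [add_mul, cartier_add, hf, hg, cartier_add, add_mul]
  | single a b =>
    induction H using AddMonoidAlgebra.induction_linear with
    | zero => rw [map_zero, mul_zero, cartier_zero, mul_zero]
    | add f g hf hg => rw [map_add, mul_add, cartier_add, hf, hg, mul_add]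
    | single c d =>
      rw [sigmaP_single, AddMonoidAlgebra.single_mul_single]
      by_cases hc : ∃ n : ℤ, (p : ℤ) * n + r = a
      · obtain ⟨n, rfl⟩ := hc
        have h1 : (p : ℤ) * n + r + (p : ℤ) * c = (p : ℤ) * (n + c) + r := by ring
        rw [h1, cartier_single_hit, cartier_single_hit, AddMonoidAlgebra.single_mul_single]
      · push_neg at hc
        have h2 : ∀ m : ℤ, (p : ℤ) * m + r ≠ a + (p : ℤ) * c := by
          intro m hm
          exact hc (m - c) (by linarith)
        rw [cartier_single_miss _ _ _ _ h2, cartier_single_miss _ _ _ _ hc, zero_mul]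

omit [NeZero p] in
lemma CartierAux.dvd_single {c : A} (h : (p : A) ∣ c) (m : ℤ) :
    (p : LaurentPolynomial A) ∣ (AddMonoidAlgebra.single m c : LaurentPolynomial A) := by
  obtain ⟨d, hd⟩ := h
  refine ⟨AddMonoidAlgebra.single m d, ?_⟩
  have hC : (p : LaurentPolynomial A) = AddMonoidAlgebra.single (0 : ℤ) ((p : ℕ) : A) := by
    rw [← map_natCast (LaurentPolynomial.C (R := A)) p]; rfl
  rw [hC, AddMonoidAlgebra.single_mul_single, zero_add, ← hd]

end CartierAux

section FrobAux

open CartierAux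

variable (p : ℕ) [Fact p.Prime] (α : ℕ)

instance : NeZero (p ^ α) := ⟨pow_ne_zero _ (Fact.out (p := p.Prime)).ne_zero⟩

lemma CartierAux.zmod_dvd_pow_sub (hα : 1 ≤ α) (b : ZMod (p ^ α)) :
    (p : ZMod (p ^ α)) ∣ b ^ p - b := by
  have hd : p ∣ p ^ α := dvd_pow_self p (by omega)
  set c := b ^ p - b with hc
  have h0 : ZMod.castHom hd (ZMod p) c = 0 := by
    rw [hc, map_sub, map_pow, ZMod.pow_card, sub_self]
  have hval : (p : ℕ) ∣ c.val := by
    rw [ZMod.castHom_apply, ← ZMod.natCast_val] at h0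
    exact (ZMod.natCast_eq_zero_iff _ _).mp h0
  obtain ⟨k, hk⟩ := hval
  refine ⟨(k : ZMod (p ^ α)), ?_⟩
  have h1 : ((c.val : ℕ) : ZMod (p ^ α)) = c := ZMod.natCast_zmod_val c
  rw [← h1, hk]; push_cast; ring

lemma CartierAux.frob_add (f g : LaurentPolynomial (ZMod (p ^ α)))
    (hf : (p : LaurentPolynomial (ZMod (p ^ α))) ∣ f ^ p - sigmaP p f)
    (hg : (p : LaurentPolynomial (ZMod (p ^ α))) ∣ g ^ p - sigmaP p g) :
    (p : LaurentPolynomial (ZMod (p ^ α))) ∣ (f + g) ^ p - sigmaP p (f + g) := by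
  have hp : p.Prime := Fact.out
  obtain ⟨s, hs⟩ := exists_add_pow_prime_eq hp f g
  rw [hs, map_add]
  have : f ^ p + g ^ p + (p : LaurentPolynomial (ZMod (p ^ α))) * f * g * s
      - (sigmaP p f + sigmaP p g)
      = (f ^ p - sigmaP p f) + (g ^ p - sigmaP p g) + (p : LaurentPolynomial _) * (f * g * s) := by
    ring
  rw [this]
  exact dvd_add (dvd_add hf hg) (Dvd.intro _ rfl)

lemma CartierAux.frob_single (hα : 1 ≤ α) (m : ℤ) (b : ZMod (p ^ α)) :
    (p : LaurentPolynomial (ZMod (p ^ α))) ∣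
      (AddMonoidAlgebra.single m b : LaurentPolynomial (ZMod (p ^ α))) ^ p
        - sigmaP p (AddMonoidAlgebra.single m b) := by
  rw [show ((AddMonoidAlgebra.single m b : AddMonoidAlgebra (ZMod (p ^ α)) ℤ) ^ p)
      = AddMonoidAlgebra.single (p • m) (b ^ p) from AddMonoidAlgebra.single_pow m b p,
    sigmaP_single]
  have hm : p • m = (p : ℤ) * m := nsmul_eq_mul p m
  rw [hm, ← AddMonoidAlgebra.single_sub]
  exact dvd_single p (zmod_dvd_pow_sub p α hα b) _

lemma CartierAux.frob (hα : 1 ≤ α) (F : LaurentPolynomial (ZMod (p ^ α))) :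
    (p : LaurentPolynomial (ZMod (p ^ α))) ∣ F ^ p - sigmaP p F := by
  have hp : p.Prime := Fact.out
  induction F using AddMonoidAlgebra.induction_linear with
  | zero => rw [map_zero, zero_pow hp.ne_zero, sub_zero]; exact dvd_zero _
  | add f g hf hg => exact frob_add p α f g hf hg
  | single m b => exact frob_single p α hα m b

lemma CartierAux.pow_pow_eq_sigmaP (hα : 1 ≤ α) (F : LaurentPolynomial (ZMod (p ^ α))) :
    F ^ p ^ α = sigmaP p (F ^ p ^ (α - 1)) := by
  have hd := dvd_sub_pow_of_dvd_sub (frob p α hα F) (α - 1)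
  rw [show α - 1 + 1 = α from by omega] at hd
  have hz : ((p : LaurentPolynomial (ZMod (p ^ α))) ^ α) = 0 := by
    have h1 : ((p : LaurentPolynomial (ZMod (p ^ α))) ^ α)
        = ((p ^ α : ℕ) : LaurentPolynomial (ZMod (p ^ α))) := by push_cast; ring
    have h2 : ((p ^ α : ℕ) : LaurentPolynomial (ZMod (p ^ α)))
        = LaurentPolynomial.C ((p ^ α : ℕ) : ZMod (p ^ α)) :=
      (map_natCast (LaurentPolynomial.C (R := ZMod (p ^ α))) (p ^ α)).symm
    rw [h1, h2, ZMod.natCast_self, map_zero]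
  rw [hz] at hd
  obtain ⟨y, hy⟩ := hd
  rw [zero_mul] at hy
  have key : (F ^ p) ^ p ^ (α - 1) = (sigmaP p F) ^ p ^ (α - 1) := sub_eq_zero.mp hy
  have e1 : F ^ p ^ α = (F ^ p) ^ p ^ (α - 1) := by
    rw [← pow_mul, show p * p ^ (α - 1) = p ^ α by rw [← pow_succ']; congr 1; omega]
  rw [e1, key, ← map_pow]

end FrobAux

/-- `Λ_r (G · F^{p^α}) = Λ_r (G) · F^{p^{α-1}}` for Laurent polynomials over `ℤ/p^αℤ`. -/
theorem stmt_7 (p : ℕ) [Fact p.Prime] [NeZero p] (α : ℕ) (hα : 1 ≤ α)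
    (r : ℤ) (hr0 : 0 ≤ r) (hr : r < p)
    (F G : LaurentPolynomial (ZMod (p ^ α))) :
    cartier p r (G * F ^ p ^ α) = cartier p r G * F ^ p ^ (α - 1) := by
  rw [CartierAux.pow_pow_eq_sigmaP p α hα F, CartierAux.cartier_mul_sigmaP]
end

section
/- Let D = {0, 1, …, p − 1} ⊆ ℤ/p^αℤ and let Q ∈ (ℤ/p^αℤ)[x, y, y⁻¹] be a Laurent polynomial whose constant term is a unit. If T₀, …, T_{α−1} and U₀, …, U_{α−1} are Laurent polynomials with all coefficients in D and (Σ_{k=0}^{α−1} T_k p^k Q^{−k}) Q^{p^{α−1}−1} = (Σ_{k=0}^{α−1} U_k p^k Q^{−k}) Q^{p^{α−1}−1} as Laurent series over ℤ/p^αℤ, then T_k = U_k for all k. (Uniqueness of base-p/Q representations.) -/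
open LaurentPolynomial in
/-- Map on Laurent polynomials induced by a ring hom on coefficients. -/
noncomputable def lmap {A B : Type*} [CommSemiring A] [CommSemiring B] (f : A →+* B) :
    LaurentPolynomial A →+* LaurentPolynomial B :=
  AddMonoidAlgebra.liftNCRingHom (LaurentPolynomial.C.comp f)
    { toFun := fun n => T (Multiplicative.toAdd n)
      map_one' := by show T (Multiplicative.toAdd (1 : Multiplicative ℤ)) = 1; rw [toAdd_one, T_zero]
      map_mul' := fun a b => by show T (Multiplicative.toAdd (a*b)) = _; rw [toAdd_mul, T_add] }
    (fun x y => Commute.all _ _)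

theorem lmap_single {A B : Type*} [CommSemiring A] [CommSemiring B] (f : A →+* B)
    (a : ℤ) (b : A) :
    lmap f (AddMonoidAlgebra.single a b) = AddMonoidAlgebra.single a (f b) := by
  show AddMonoidAlgebra.liftNC _ _ (AddMonoidAlgebra.single a b) = _
  rw [AddMonoidAlgebra.liftNC_single]
  exact (LaurentPolynomial.single_eq_C_mul_T (f b) a).symm

theorem lmap_apply {A B : Type*} [CommSemiring A] [CommSemiring B] (f : A →+* B)
    (L : LaurentPolynomial A) (j : ℤ) : (lmap f L).coeff j = f (L.coeff j) := by
  induction L using AddMonoidAlgebra.induction_linear with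
  | zero => simp
  | add a b ha hb => rw [map_add, AddMonoidAlgebra.coeff_add, AddMonoidAlgebra.coeff_add, Finsupp.add_apply, Finsupp.add_apply, ha, hb, map_add]
  | single a b =>
    show (lmap f (AddMonoidAlgebra.single a b)).coeff j = f ((AddMonoidAlgebra.single a b).coeff j)
    rw [lmap_single, AddMonoidAlgebra.coeff_single, AddMonoidAlgebra.coeff_single, Finsupp.single_apply, Finsupp.single_apply, apply_ite f, map_zero]

/-- Uniqueness of base-`p/Q` representations.  Model `(ℤ/p^αℤ)[x, y, y⁻¹]` as
polynomials in `x` whose coefficients are Laurent polynomials in `y`.  Let `Q` have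
unit constant term, and let `T₀, …, T_{α-1}` and `U₀, …, U_{α-1}` be Laurent
polynomials all of whose coefficients lie in `D = {0, 1, …, p-1}`.  If
`(Σ_k T_k p^k Q^{-k}) Q^{p^{α-1}-1} = (Σ_k U_k p^k Q^{-k}) Q^{p^{α-1}-1}`
(equivalently, after clearing denominators,
`Σ_k T_k p^k Q^{p^{α-1}-1-k} = Σ_k U_k p^k Q^{p^{α-1}-1-k}`), then `T_k = U_k`
for all `k`. -/
theorem stmt_11 (p : ℕ) [Fact p.Prime] (α : ℕ) (hα : 1 ≤ α)
    (Q : Polynomial (LaurentPolynomial (ZMod (p ^ α))))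
    (hQ : IsUnit ((Q.coeff 0).coeff 0))
    (T U : Fin α → Polynomial (LaurentPolynomial (ZMod (p ^ α))))
    (hT : ∀ (k : Fin α) (i : ℕ) (j : ℤ), ∃ m : ℕ, m < p ∧
      ((T k).coeff i).coeff j = (m : ZMod (p ^ α)))
    (hU : ∀ (k : Fin α) (i : ℕ) (j : ℤ), ∃ m : ℕ, m < p ∧
      ((U k).coeff i).coeff j = (m : ZMod (p ^ α)))
    (heq : ∑ k : Fin α,
        T k * (p : Polynomial (LaurentPolynomial (ZMod (p ^ α)))) ^ (k : ℕ) *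
          Q ^ (p ^ (α - 1) - 1 - (k : ℕ)) =
      ∑ k : Fin α,
        U k * (p : Polynomial (LaurentPolynomial (ZMod (p ^ α)))) ^ (k : ℕ) *
          Q ^ (p ^ (α - 1) - 1 - (k : ℕ))) :
    ∀ k, T k = U k := by
  have hp : p.Prime := Fact.out
  haveI : NeZero p := ⟨hp.pos.ne'⟩
  have main : ∀ k : Fin α, (∀ j : Fin α, j < k → T j = U j) → T k = U k := by
    intro k hprev
    set K := (k : ℕ) with hK
    have hk1 : K + 1 ≤ α := k.2
    haveI : NeZero (p ^ (K + 1)) := ⟨pow_ne_zero _ hp.pos.ne'⟩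
    set R1 := ZMod (p ^ (K + 1)) with hR1
    let f1 : ZMod (p ^ α) →+* R1 := ZMod.castHom (pow_dvd_pow p hk1) _
    let f2 : R1 →+* ZMod p := ZMod.castHom (dvd_pow_self p (Nat.succ_ne_zero K)) _
    let Φ1 := Polynomial.mapRingHom (lmap f1)
    let Φ2 := Polynomial.mapRingHom (lmap f2)
    set E := p ^ (α - 1) - 1 with hE
    have hsum : ∑ j : Fin α, (T j - U j) *
        (p : Polynomial (LaurentPolynomial (ZMod (p ^ α)))) ^ (j : ℕ) * Q ^ (E - (j : ℕ)) = 0 := by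
      have h := sub_eq_zero_of_eq heq
      rw [← Finset.sum_sub_distrib] at h
      simpa [sub_mul] using h
    have h1 : ∑ j : Fin α, Φ1 (T j - U j) *
        (p : Polynomial (LaurentPolynomial R1)) ^ (j : ℕ) * Φ1 Q ^ (E - (j : ℕ)) = 0 := by
      have h := congrArg Φ1 hsum
      simpa [map_sum, map_mul, map_pow, map_natCast] using h
    have hpK : (p : Polynomial (LaurentPolynomial R1)) ^ (K + 1) = 0 := by
      have hc : (p : Polynomial (LaurentPolynomial R1)) =
          Polynomial.C (LaurentPolynomial.C (p : R1)) := by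
        rw [map_natCast, map_natCast]
      rw [hc, ← map_pow, ← map_pow, ← Nat.cast_pow, ZMod.natCast_self, map_zero, map_zero]
    have h2 : Φ1 (T k - U k) * (p : Polynomial (LaurentPolynomial R1)) ^ K *
        Φ1 Q ^ (E - K) = 0 := by
      rw [Finset.sum_eq_single k] at h1
      · exact h1
      · intro j _ hj
        rcases lt_or_gt_of_ne hj with hlt | hgt
        · rw [sub_eq_zero_of_eq (hprev j hlt), map_zero, zero_mul, zero_mul]
        · have hj0 : (p : Polynomial (LaurentPolynomial R1)) ^ (j : ℕ) = 0 := by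
            calc (p : Polynomial (LaurentPolynomial R1)) ^ (j : ℕ)
                = (p : Polynomial (LaurentPolynomial R1)) ^ (K + 1) *
                  (p : Polynomial (LaurentPolynomial R1)) ^ ((j : ℕ) - (K + 1)) := by
                  rw [← pow_add]; congr 1; have := Fin.lt_def.mp hgt; omega
              _ = 0 := by rw [hpK, zero_mul]
          rw [hj0, mul_zero, zero_mul]
      · intro h; exact absurd (Finset.mem_univ k) h
    -- the annihilation lemma
    have hann : ∀ z : R1, (p : R1) ^ K * z = 0 → f2 z = 0 := by
      intro z hz
      have hzv : ((z.val : ℕ) : R1) = z := by rw [ZMod.natCast_val, ZMod.cast_id]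
      rw [← hzv, ← Nat.cast_pow, ← Nat.cast_mul] at hz
      have hdvd : p ^ (K + 1) ∣ p ^ K * z.val := (ZMod.natCast_eq_zero_iff _ _).mp hz
      have hdvd2 : p ∣ z.val := by
        rcases hdvd with ⟨c, hc⟩
        refine ⟨c, Nat.eq_of_mul_eq_mul_left (pow_pos hp.pos K) ?_⟩
        rw [hc, pow_succ]; ring
      show f2 z = 0
      rw [show f2 z = ZMod.castHom (dvd_pow_self p (Nat.succ_ne_zero K)) (ZMod p) z from rfl,
        ZMod.castHom_apply, ← ZMod.natCast_val]
      exact (ZMod.natCast_eq_zero_iff _ _).mpr hdvd2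
    set W := Φ1 (T k - U k) * Φ1 Q ^ (E - K) with hWdef
    have hW : (p : Polynomial (LaurentPolynomial R1)) ^ K * W = 0 := by
      rw [hWdef, ← h2]; ring
    have hB : Φ2 W = 0 := by
      apply Polynomial.ext; intro i
      show (Polynomial.map (lmap f2) W).coeff i = 0
      rw [Polynomial.coeff_map]
      apply LaurentPolynomial.ext; intro j
      rw [lmap_apply]
      apply hann
      have hcoeffW := congrArg (fun P : Polynomial (LaurentPolynomial R1) =>
        (P.coeff i).coeff j) hW
      simp only [Polynomial.coeff_zero, AddMonoidAlgebra.coeff_zero, Finsupp.coe_zero, Pi.zero_apply] at hcoeffW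
      have hc1 : ((p : Polynomial (LaurentPolynomial R1)) ^ K * W).coeff i =
          (p : LaurentPolynomial R1) ^ K * W.coeff i := by
        rw [show (p : Polynomial (LaurentPolynomial R1)) ^ K =
          Polynomial.C ((p : LaurentPolynomial R1) ^ K) from by rw [map_pow, map_natCast],
          Polynomial.coeff_C_mul]
      have hc2 : ((p : LaurentPolynomial R1) ^ K * W.coeff i).coeff j =
          (p : R1) ^ K * (W.coeff i).coeff j := by
        rw [show (p : LaurentPolynomial R1) ^ K =
          LaurentPolynomial.C ((p : R1) ^ K) from by rw [map_pow, map_natCast]]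
        exact AddMonoidAlgebra.coeff_single_zero_mul (W.coeff i) ((p : R1) ^ K) j
      rw [hc1] at hcoeffW
      rw [hc2] at hcoeffW
      exact hcoeffW
    have hC : Φ2 (Φ1 (T k - U k)) * Φ2 (Φ1 Q) ^ (E - K) = 0 := by
      have h := hB
      rw [hWdef, map_mul, map_pow] at h
      exact h
    have hQne : Φ2 (Φ1 Q) ≠ 0 := by
      intro h0
      have hz : ((Φ2 (Φ1 Q)).coeff 0).coeff 0 = 0 := by rw [h0]; simp
      have hu : IsUnit (((Φ2 (Φ1 Q)).coeff 0).coeff 0) := by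
        show IsUnit (((Polynomial.map (lmap f2) (Polynomial.map (lmap f1) Q)).coeff 0).coeff 0)
        rw [Polynomial.coeff_map, lmap_apply, Polynomial.coeff_map, lmap_apply]
        exact (hQ.map f1).map f2
      exact hu.ne_zero hz
    have hV0 : Φ2 (Φ1 (T k - U k)) = 0 := by
      rcases mul_eq_zero.mp hC with h | h
      · exact h
      · exact absurd h (pow_ne_zero _ hQne)
    -- read off coefficients
    apply Polynomial.ext; intro i
    apply LaurentPolynomial.ext; intro j
    obtain ⟨m, hm, hTm⟩ := hT k i j
    obtain ⟨m', hm', hUm⟩ := hU k i j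
    have hz : f2 (f1 (((T k - U k).coeff i).coeff j)) = 0 := by
      have h := congrArg (fun P : Polynomial (LaurentPolynomial (ZMod p)) =>
        (P.coeff i).coeff j) hV0
      simp only [Polynomial.coeff_zero, AddMonoidAlgebra.coeff_zero, Finsupp.coe_zero, Pi.zero_apply] at h
      rw [show Φ2 (Φ1 (T k - U k)) = Polynomial.map (lmap f2)
        (Polynomial.map (lmap f1) (T k - U k)) from rfl, Polynomial.coeff_map, lmap_apply,
        Polynomial.coeff_map, lmap_apply] at h
      exact h
    rw [Polynomial.coeff_sub, AddMonoidAlgebra.coeff_sub, Finsupp.sub_apply, hTm, hUm, map_sub, map_sub,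
      map_natCast, map_natCast, map_natCast, map_natCast, sub_eq_zero] at hz
    have hmm : m = m' := by
      have h := congrArg ZMod.val hz
      rwa [ZMod.val_cast_of_lt hm, ZMod.val_cast_of_lt hm'] at h
    rw [hTm, hUm, hmm]
  suffices h : ∀ n : ℕ, ∀ k : Fin α, (k : ℕ) < n → T k = U k by
    exact fun k => h α k k.2
  intro n
  induction n with
  | zero => intro k hk; omega
  | succ n ih =>
    intro k hk
    rcases Nat.lt_or_ge (k : ℕ) n with h | h
    · exact ih k h
    · exact main k (fun j hj => ih j (by have := Fin.lt_def.mp hj; omega))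
end

section
/- With the same setup, every element of the form (Σ_{k=0}^{α−1} T'_k (p/Q)^k) Q^{p^{α−1}−1}, where the T'_k are arbitrary Laurent polynomials over ℤ/p^αℤ, has a base-p/Q representation, i.e., can be rewritten with digits having coefficients in D = {0, …, p − 1} by performing carries. Consequently the set of Laurent polynomials admitting a base-p/Q representation is closed under addition. -/
noncomputable def pmapAux (n : ℕ) (f : ZMod n → ZMod n) (hf : f 0 = 0)
    (P : Polynomial (LaurentPolynomial (ZMod n))) : Polynomial (LaurentPolynomial (ZMod n)) :=
  ⟨AddMonoidAlgebra.ofCoeff (P.toFinsupp.coeff.mapRange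
    (fun q => (AddMonoidAlgebra.ofCoeff (Finsupp.mapRange f hf q.coeff) : LaurentPolynomial (ZMod n)))
    (by ext a; simp))⟩

lemma pmapAux_coeff (n : ℕ) (f : ZMod n → ZMod n) (hf : f 0 = 0)
    (P : Polynomial (LaurentPolynomial (ZMod n))) (i : ℕ) (j : ℤ) :
    ((pmapAux n f hf P).coeff i).coeff j = f ((P.coeff i).coeff j) := by
  rfl

noncomputable def rpoly (p n : ℕ) (P : Polynomial (LaurentPolynomial (ZMod n))) :
    Polynomial (LaurentPolynomial (ZMod n)) :=
  pmapAux n (fun a => ((a.val % p : ℕ) : ZMod n)) (by simp) P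

noncomputable def upoly (p n : ℕ) (P : Polynomial (LaurentPolynomial (ZMod n))) :
    Polynomial (LaurentPolynomial (ZMod n)) :=
  pmapAux n (fun a => ((a.val / p : ℕ) : ZMod n)) (by simp) P

lemma zmod_decomp (p n : ℕ) [NeZero n] (a : ZMod n) :
    a = ((a.val % p : ℕ) : ZMod n) + p * ((a.val / p : ℕ) : ZMod n) := by
  conv_lhs => rw [← ZMod.natCast_rightInverse a, ← Nat.mod_add_div a.val p]
  push_cast
  ring

lemma poly_decomp (p n : ℕ) [NeZero n] (P : Polynomial (LaurentPolynomial (ZMod n))) :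
    P = rpoly p n P + (p : Polynomial (LaurentPolynomial (ZMod n))) * upoly p n P := by
  apply Polynomial.ext
  intro i
  apply AddMonoidAlgebra.ext
  apply Finsupp.ext
  intro j
  have h1 : ((rpoly p n P).coeff i).coeff j = (((P.coeff i).coeff j).val % p : ℕ) := pmapAux_coeff ..
  have h2 : ((upoly p n P).coeff i).coeff j = (((P.coeff i).coeff j).val / p : ℕ) := pmapAux_coeff ..
  have h3 : (((rpoly p n P) + (p : Polynomial (LaurentPolynomial (ZMod n))) * upoly p n P).coeff i).coeff j
      = ((rpoly p n P).coeff i).coeff j + (p : ZMod n) * ((upoly p n P).coeff i).coeff j := by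
    rw [Polynomial.coeff_add, Polynomial.coeff_natCast_mul, ← nsmul_eq_mul]
    erw [AddMonoidAlgebra.coeff_add, Finsupp.add_apply, AddMonoidAlgebra.coeff_smul_apply]
    rw [nsmul_eq_mul]
  rw [h3, h1, h2]
  exact zmod_decomp p n _

lemma key_lemma (p : ℕ) [Fact p.Prime] (α : ℕ) (hα : 1 ≤ α)
    (Q : Polynomial (LaurentPolynomial (ZMod (p ^ α)))) (d : ℕ) :
    d ≤ α → ∀ T' : Fin α → Polynomial (LaurentPolynomial (ZMod (p ^ α))),
      ∃ T : Fin α → Polynomial (LaurentPolynomial (ZMod (p ^ α))),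
        (∀ (k : Fin α), (k : ℕ) < d → ∀ (i : ℕ) (j : ℤ), ∃ m : ℕ, m < p ∧
          ((T k).coeff i).coeff j = (m : ZMod (p ^ α))) ∧
        ∑ k : Fin α,
            T k * (p : Polynomial (LaurentPolynomial (ZMod (p ^ α)))) ^ (k : ℕ) *
              Q ^ (p ^ (α - 1) - 1 - (k : ℕ)) =
          ∑ k : Fin α,
            T' k * (p : Polynomial (LaurentPolynomial (ZMod (p ^ α)))) ^ (k : ℕ) *
              Q ^ (p ^ (α - 1) - 1 - (k : ℕ)) := by
  haveI : NeZero (p ^ α) := ⟨pow_ne_zero α (Fact.out : p.Prime).ne_zero⟩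
  have hp : 0 < p := (Fact.out : p.Prime).pos
  set N := p ^ (α - 1) - 1 with hNdef
  have hαle : α ≤ p ^ (α - 1) := by
    have h2 : α - 1 < 2 ^ (α - 1) := Nat.lt_two_pow_self
    have h3 : 2 ^ (α - 1) ≤ p ^ (α - 1) :=
      Nat.pow_le_pow_left (Fact.out : p.Prime).two_le _
    omega
  induction d with
  | zero => exact fun _ T' => ⟨T', by simp, rfl⟩
  | succ d ih =>
    intro hd T'
    obtain ⟨T2, hT2D, hT2F⟩ := ih (Nat.le_of_succ_le hd) T'
    have hdα : d < α := hd
    set kd : Fin α := ⟨d, hdα⟩ with hkd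
    set A : Polynomial (LaurentPolynomial (ZMod (p ^ α))) := rpoly p (p ^ α) (T2 kd) - T2 kd with hA
    set U : Polynomial (LaurentPolynomial (ZMod (p ^ α))) := upoly p (p ^ α) (T2 kd) with hU
    have hAval : A = -((p : Polynomial (LaurentPolynomial (ZMod (p ^ α)))) * U) := by
      rw [hA, hU]
      nth_rewrite 2 [poly_decomp p (p ^ α) (T2 kd)]
      ring
    have digit_r : ∀ (i : ℕ) (j : ℤ), ∃ m : ℕ, m < p ∧
        ((rpoly p (p ^ α) (T2 kd)).coeff i).coeff j = (m : ZMod (p ^ α)) := by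
      intro i j
      exact ⟨(((T2 kd).coeff i).coeff j).val % p, Nat.mod_lt _ hp, pmapAux_coeff ..⟩
    by_cases hcase : d + 1 < α
    · -- not the last digit: carry into digit d+1
      set kd1 : Fin α := ⟨d + 1, hcase⟩ with hkd1
      have hne : kd ≠ kd1 := by
        simp only [hkd, hkd1, ne_eq, Fin.mk.injEq]
        omega
      set T3 : Fin α → Polynomial (LaurentPolynomial (ZMod (p ^ α))) := fun k =>
        T2 k + (if k = kd then A else 0) + (if k = kd1 then U * Q else 0) with hT3
      refine ⟨T3, ?_, ?_⟩
      · intro k hk i j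
        by_cases hkkd : k = kd
        · have : T3 k = rpoly p (p ^ α) (T2 kd) := by
            rw [hT3]
            simp only [hkkd, if_neg hne, eq_self_iff_true, if_true, hA]
            ring
          rw [this]
          exact digit_r i j
        · have hkval : (k : ℕ) < d := by
            rcases Nat.lt_succ_iff_lt_or_eq.mp hk with h | h
            · exact h
            · exact absurd (Fin.ext h : k = kd) hkkd
          have hkkd1 : k ≠ kd1 := by
            intro h
            rw [h] at hkval
            have hv : (kd1 : ℕ) = d + 1 := rfl
            omega
          have : T3 k = T2 k := by
            rw [hT3]; simp [hkkd, hkkd1]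
          rw [this]
          exact hT2D k hkval i j
      · rw [← hT2F]
        have expand : ∀ k : Fin α,
            T3 k * (p : Polynomial (LaurentPolynomial (ZMod (p ^ α)))) ^ (k : ℕ) * Q ^ (N - (k : ℕ)) =
            T2 k * (p : Polynomial (LaurentPolynomial (ZMod (p ^ α)))) ^ (k : ℕ) * Q ^ (N - (k : ℕ))
            + (if k = kd then A * (p : Polynomial (LaurentPolynomial (ZMod (p ^ α)))) ^ d * Q ^ (N - d) else 0)
            + (if k = kd1 then (U * Q) * (p : Polynomial (LaurentPolynomial (ZMod (p ^ α)))) ^ (d+1) * Q ^ (N - (d+1)) else 0) := by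
          intro k
          by_cases h1 : k = kd
          · have h2 : k ≠ kd1 := by rw [h1]; exact hne
            subst h1
            simp [hT3, h2, hkd, hkd1]
            try ring
          · by_cases h2 : k = kd1
            · subst h2
              simp [hT3, h1, hkd1, hkd]
              try ring
            · simp [hT3, h1, h2]
        rw [Finset.sum_congr rfl (fun k _ => expand k)]
        rw [Finset.sum_add_distrib, Finset.sum_add_distrib]
        rw [Finset.sum_ite_eq' Finset.univ kd, Finset.sum_ite_eq' Finset.univ kd1]
        simp only [Finset.mem_univ, if_true]
        have hd1N : d + 1 ≤ N := by omega
        have hNe : N - d = (N - (d + 1)) + 1 := by omega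
        rw [hAval, hNe]
        ring
    · -- last digit: the carry vanishes since p^α = 0
      have hdlast : d + 1 = α := by omega
      have hp0 : (p : Polynomial (LaurentPolynomial (ZMod (p ^ α)))) ^ (d + 1) = 0 := by
        rw [hdlast, ← Nat.cast_pow,
          ← map_natCast ((Polynomial.C).comp (LaurentPolynomial.C (R := ZMod (p ^ α)))) (p ^ α),
          ZMod.natCast_self, map_zero]
      set T3 : Fin α → Polynomial (LaurentPolynomial (ZMod (p ^ α))) := fun k =>
        T2 k + (if k = kd then A else 0) with hT3
      refine ⟨T3, ?_, ?_⟩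
      · intro k hk i j
        by_cases hkkd : k = kd
        · have : T3 k = rpoly p (p ^ α) (T2 kd) := by
            rw [hT3]
            simp only [hkkd, eq_self_iff_true, if_true, hA]
            ring
          rw [this]
          exact digit_r i j
        · have hkval : (k : ℕ) < d := by
            rcases Nat.lt_succ_iff_lt_or_eq.mp hk with h | h
            · exact h
            · exact absurd (Fin.ext h : k = kd) hkkd
          have : T3 k = T2 k := by
            rw [hT3]; simp [hkkd]
          rw [this]
          exact hT2D k hkval i j
      · rw [← hT2F]
        have expand : ∀ k : Fin α,
            T3 k * (p : Polynomial (LaurentPolynomial (ZMod (p ^ α)))) ^ (k : ℕ) * Q ^ (N - (k : ℕ)) =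
            T2 k * (p : Polynomial (LaurentPolynomial (ZMod (p ^ α)))) ^ (k : ℕ) * Q ^ (N - (k : ℕ))
            + (if k = kd then A * (p : Polynomial (LaurentPolynomial (ZMod (p ^ α)))) ^ d * Q ^ (N - d) else 0) := by
          intro k
          by_cases h1 : k = kd
          · subst h1
            simp [hT3, hkd]
            try ring
          · simp [hT3, h1]
        rw [Finset.sum_congr rfl (fun k _ => expand k)]
        rw [Finset.sum_add_distrib]
        rw [Finset.sum_ite_eq' Finset.univ kd]
        simp only [Finset.mem_univ, if_true]
        rw [hAval]
        linear_combination (-(U * Q ^ (N - d))) * hp0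


/-- Existence of base-`p/Q` representations (carrying).  Model `(ℤ/p^αℤ)[x, y, y⁻¹]`
as polynomials in `x` with coefficients Laurent polynomials in `y`, and let `Q` have
unit constant term.  Every element of the form `(Σ_k T'_k (p/Q)^k) Q^{p^{α-1}-1}`
with arbitrary digits `T'_k` has a base-`p/Q` representation with digits whose
coefficients all lie in `D = {0, …, p-1}`; consequently, the set of elements
admitting a base-`p/Q` representation is closed under addition. -/
theorem stmt_12 (p : ℕ) [Fact p.Prime] (α : ℕ) (hα : 1 ≤ α)
    (Q : Polynomial (LaurentPolynomial (ZMod (p ^ α))))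
    (hQ : IsUnit ((Q.coeff 0).coeff 0)) :
    (∀ T' : Fin α → Polynomial (LaurentPolynomial (ZMod (p ^ α))),
      ∃ T : Fin α → Polynomial (LaurentPolynomial (ZMod (p ^ α))),
        (∀ (k : Fin α) (i : ℕ) (j : ℤ), ∃ m : ℕ, m < p ∧
          ((T k).coeff i).coeff j = (m : ZMod (p ^ α))) ∧
        ∑ k : Fin α,
            T k * (p : Polynomial (LaurentPolynomial (ZMod (p ^ α)))) ^ (k : ℕ) *
              Q ^ (p ^ (α - 1) - 1 - (k : ℕ)) =
          ∑ k : Fin α,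
            T' k * (p : Polynomial (LaurentPolynomial (ZMod (p ^ α)))) ^ (k : ℕ) *
              Q ^ (p ^ (α - 1) - 1 - (k : ℕ))) ∧
    (∀ T U : Fin α → Polynomial (LaurentPolynomial (ZMod (p ^ α))),
      (∀ (k : Fin α) (i : ℕ) (j : ℤ), ∃ m : ℕ, m < p ∧
        ((T k).coeff i).coeff j = (m : ZMod (p ^ α))) →
      (∀ (k : Fin α) (i : ℕ) (j : ℤ), ∃ m : ℕ, m < p ∧
        ((U k).coeff i).coeff j = (m : ZMod (p ^ α))) →
      ∃ V : Fin α → Polynomial (LaurentPolynomial (ZMod (p ^ α))),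
        (∀ (k : Fin α) (i : ℕ) (j : ℤ), ∃ m : ℕ, m < p ∧
          ((V k).coeff i).coeff j = (m : ZMod (p ^ α))) ∧
        ∑ k : Fin α,
            V k * (p : Polynomial (LaurentPolynomial (ZMod (p ^ α)))) ^ (k : ℕ) *
              Q ^ (p ^ (α - 1) - 1 - (k : ℕ)) =
          (∑ k : Fin α,
            T k * (p : Polynomial (LaurentPolynomial (ZMod (p ^ α)))) ^ (k : ℕ) *
              Q ^ (p ^ (α - 1) - 1 - (k : ℕ))) +
          ∑ k : Fin α,
            U k * (p : Polynomial (LaurentPolynomial (ZMod (p ^ α)))) ^ (k : ℕ) *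
              Q ^ (p ^ (α - 1) - 1 - (k : ℕ))) := by
  constructor
  · intro T'
    obtain ⟨T, hTD, hTF⟩ := key_lemma p α hα Q α le_rfl T'
    exact ⟨T, fun k => hTD k k.2, hTF⟩
  · intro T U hT hU
    obtain ⟨V, hVD, hVF⟩ := key_lemma p α hα Q α le_rfl (fun k => T k + U k)
    refine ⟨V, fun k => hVD k k.2, ?_⟩
    rw [hVF]
    rw [Finset.sum_congr rfl (fun (k : Fin α) _ =>
      (show (T k + U k) * (p : Polynomial (LaurentPolynomial (ZMod (p ^ α)))) ^ (k : ℕ) *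
          Q ^ (p ^ (α - 1) - 1 - (k : ℕ)) =
        T k * (p : Polynomial (LaurentPolynomial (ZMod (p ^ α)))) ^ (k : ℕ) *
          Q ^ (p ^ (α - 1) - 1 - (k : ℕ)) +
        U k * (p : Polynomial (LaurentPolynomial (ZMod (p ^ α)))) ^ (k : ℕ) *
          Q ^ (p ^ (α - 1) - 1 - (k : ℕ)) by ring))]
    rw [Finset.sum_add_distrib]
end

section
/- Let Q ∈ (ℤ/p^βℤ)[x, y, y⁻¹] be a Laurent polynomial with unit constant term, and set Δ = Q(x^p, y^p) − Q(x, y)^p, which satisfies Δ ≡ 0 mod p. Then for every k ≥ 0, the Laurent series Q(x^p, y^p)^{k+β} / Q(x, y)^{k+1} equals the Laurent polynomial Σ_{m=k+1}^{k+β} C(k+β, m) Q^{pm−k−1} Δ^{k+β−m}; in particular it is a Laurent polynomial. -/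
/-- Let `Q ∈ (ℤ/p^βℤ)[x, y, y⁻¹]` (modeled as a polynomial in `x` with Laurent
polynomial coefficients in `y`) have unit constant term, and set
`Δ = Q(x^p, y^p) - Q(x, y)^p`.  Then `Δ ≡ 0 mod p`, and for every `k ≥ 0`,
`Q(x^p, y^p)^{k+β} = (Σ_{m=k+1}^{k+β} C(k+β, m) Q^{pm-k-1} Δ^{k+β-m}) · Q^{k+1}`;
in particular the Laurent series `Q(x^p, y^p)^{k+β} / Q^{k+1}` is the displayed
Laurent polynomial. -/
theorem stmt_13 (p : ℕ) [Fact p.Prime] (β : ℕ) (hβ : 1 ≤ β)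
    (Q : Polynomial (LaurentPolynomial (ZMod (p ^ β))))
    (hQ : IsUnit ((Q.coeff 0).coeff 0))
    (Qf : Polynomial (LaurentPolynomial (ZMod (p ^ β))))
    (hQf : Qf = Polynomial.expand (LaurentPolynomial (ZMod (p ^ β))) p
      (Q.map (AddMonoidAlgebra.mapDomainRingHom (ZMod (p ^ β))
        (AddMonoidHom.mk' (fun n : ℤ => (p : ℤ) * n) (fun a b => by ring)))))
    (Δ : Polynomial (LaurentPolynomial (ZMod (p ^ β))))
    (hΔ : Δ = Qf - Q ^ p) :
    (p : Polynomial (LaurentPolynomial (ZMod (p ^ β)))) ∣ Δ ∧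
    ∀ k : ℕ, Qf ^ (k + β) =
      (∑ m ∈ Finset.Icc (k + 1) (k + β),
        ((k + β).choose m : Polynomial (LaurentPolynomial (ZMod (p ^ β)))) *
          Q ^ (p * m - k - 1) * Δ ^ (k + β - m)) * Q ^ (k + 1) := by
  have hp : p.Prime := Fact.out
  haveI : NeZero (p ^ β) := ⟨pow_ne_zero β hp.ne_zero⟩
  have hpd : p ∣ p ^ β := dvd_pow_self p (by omega)
  set R := ZMod (p ^ β) with hR
  set φ : ZMod (p ^ β) →+* ZMod p := ZMod.castHom hpd (ZMod p) with hφ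
  -- scalar divisibility
  have keyd : ∀ a : ZMod (p ^ β), φ a = 0 → (p : ZMod (p ^ β)) ∣ a := by
    intro a h
    have hv : ((a.val : ℕ) : ZMod p) = 0 := by
      rw [ZMod.natCast_val]; rwa [ZMod.castHom_apply] at h
    rw [ZMod.natCast_eq_zero_iff] at hv
    obtain ⟨t, ht⟩ := hv
    exact ⟨(t : ZMod (p ^ β)), by rw [← ZMod.natCast_zmod_val a, ht]; push_cast; ring⟩
  -- coefficient reduction ring hom on Laurent polynomials
  set ψ : LaurentPolynomial (ZMod (p ^ β)) →+* LaurentPolynomial (ZMod p) :=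
    AddMonoidAlgebra.liftNCRingHom (AddMonoidAlgebra.singleZeroRingHom.comp φ)
      (AddMonoidAlgebra.of (ZMod p) ℤ) (fun _ _ => Commute.all _ _) with hψdef
  have hψs : ∀ (n : ℤ) (b : ZMod (p ^ β)),
      ψ (AddMonoidAlgebra.single n b) = AddMonoidAlgebra.single n (φ b) := by
    intro n b
    show AddMonoidAlgebra.liftNC _ _ _ = _
    rw [AddMonoidAlgebra.liftNC_single]
    simp [AddMonoidAlgebra.singleZeroRingHom, AddMonoidAlgebra.of_apply,
      AddMonoidAlgebra.single_mul_single]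
  have hψ : ∀ f : LaurentPolynomial (ZMod (p ^ β)),
      (ψ f).coeff = Finsupp.mapRange φ (map_zero φ) f.coeff := by
    intro f
    induction f using AddMonoidAlgebra.induction_linear with
    | zero => simp
    | add f g hf hg => rw [map_add, AddMonoidAlgebra.coeff_add, AddMonoidAlgebra.coeff_add, hf, hg,
        ← Finsupp.mapRange_add (map_add φ)]
    | single n b => rw [hψs, AddMonoidAlgebra.coeff_single, AddMonoidAlgebra.coeff_single,
        Finsupp.mapRange_single]
  -- domain dilation ring homs
  set D₁ := AddMonoidAlgebra.mapDomainRingHom (ZMod (p ^ β))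
      (AddMonoidHom.mk' (fun n : ℤ => (p : ℤ) * n) (fun a b => by ring)) with hD₁def
  set D₂ := AddMonoidAlgebra.mapDomainRingHom (ZMod p)
      (AddMonoidHom.mk' (fun n : ℤ => (p : ℤ) * n) (fun a b => by ring)) with hD₂def
  have hD₁ : ∀ (n : ℤ) (b : ZMod (p ^ β)),
      D₁ (AddMonoidAlgebra.single n b) = AddMonoidAlgebra.single ((p : ℤ) * n) b := by
    intro n b
    show AddMonoidAlgebra.mapDomain _ (AddMonoidAlgebra.single n b) = _
    rw [AddMonoidAlgebra.mapDomain_single]; rfl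
  have hD₂ : ∀ (n : ℤ) (b : ZMod p),
      D₂ (AddMonoidAlgebra.single n b) = AddMonoidAlgebra.single ((p : ℤ) * n) b := by
    intro n b
    show AddMonoidAlgebra.mapDomain _ (AddMonoidAlgebra.single n b) = _
    rw [AddMonoidAlgebra.mapDomain_single]; rfl
  haveI : CharP (LaurentPolynomial (ZMod p)) p :=
    charP_of_injective_ringHom (f := LaurentPolynomial.C)
      (fun a b h => by
        have h2 : (Finsupp.single (0:ℤ) a : ℤ →₀ ZMod p) = Finsupp.single 0 b := congrArg AddMonoidAlgebra.coeff h
        exact Finsupp.single_injective 0 h2) p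
  have hfrob : D₂ = frobenius (LaurentPolynomial (ZMod p)) p := by
    apply AddMonoidAlgebra.ringHom_ext
    · intro b
      rw [frobenius_def, AddMonoidAlgebra.single_pow, smul_zero, ZMod.pow_card, hD₂, mul_zero]
    · intro a
      rw [frobenius_def, AddMonoidAlgebra.single_pow, one_pow, nsmul_eq_mul, hD₂]
  have hcomm : ψ.comp D₁ = D₂.comp ψ := by
    apply AddMonoidAlgebra.ringHom_ext
    · intro b
      simp only [RingHom.comp_apply]
      rw [hD₁, hψs, hψs, hD₂]
    · intro a
      simp only [RingHom.comp_apply]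
      rw [hD₁, hψs, hψs, hD₂]
  -- the reduction of Δ vanishes
  have hmain : Δ.map ψ = 0 := by
    rw [hΔ, Polynomial.map_sub, Polynomial.map_pow, hQf, Polynomial.map_expand,
      Polynomial.map_map, hcomm, ← Polynomial.map_map, ← Polynomial.map_expand, hfrob,
      Polynomial.map_frobenius_expand, sub_self]
  -- divisibility
  have hdvd : (p : Polynomial (LaurentPolynomial (ZMod (p ^ β)))) ∣ Δ := by
    have hC : (p : Polynomial (LaurentPolynomial (ZMod (p ^ β))))
        = Polynomial.C ((p : ℕ) : LaurentPolynomial (ZMod (p ^ β))) := (map_natCast _ p).symm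
    rw [hC, Polynomial.C_dvd_iff_dvd_coeff]
    intro i
    have hci : ψ (Δ.coeff i) = 0 := by
      have h3 := congrArg (fun q => Polynomial.coeff q i) hmain
      simpa [Polynomial.coeff_map] using h3
    have hall : ∀ n : ℤ, φ ((Δ.coeff i).coeff n) = 0 := by
      intro n
      have := congrArg (fun g : ℤ →₀ ZMod p => g n)
        ((hψ (Δ.coeff i)).symm.trans (congrArg AddMonoidAlgebra.coeff hci))
      simpa [Finsupp.mapRange_apply] using this
    have hp2 : ((p : ℕ) : LaurentPolynomial (ZMod (p ^ β)))
        = AddMonoidAlgebra.single (0:ℤ) ((p : ℕ) : ZMod (p ^ β)) := by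
      rw [← map_natCast (AddMonoidAlgebra.singleZeroRingHom
        (R := ZMod (p ^ β)) (M := ℤ)) p]; rfl
    have hsum : Δ.coeff i = (Δ.coeff i).coeff.sum (fun n a => AddMonoidAlgebra.single n a) :=
      (AddMonoidAlgebra.sum_coeff_single _).symm
    rw [hsum]
    refine Finset.dvd_sum ?_
    intro n _
    obtain ⟨b, hb⟩ := keyd _ (hall n)
    refine ⟨AddMonoidAlgebra.single n b, ?_⟩
    rw [hp2, AddMonoidAlgebra.single_mul_single, zero_add, ← hb]
  refine ⟨hdvd, ?_⟩
  -- Δ^β = 0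
  have hΔβ : Δ ^ β = 0 := by
    obtain ⟨E, hE⟩ := hdvd
    have h0 : ((p : Polynomial (LaurentPolynomial (ZMod (p ^ β))))) ^ β = 0 := by
      have h1 : ((p : Polynomial (LaurentPolynomial (ZMod (p ^ β))))) ^ β
          = ((p ^ β : ℕ) : Polynomial (LaurentPolynomial (ZMod (p ^ β)))) := by push_cast; ring
      have h2 : ((p ^ β : ℕ) : Polynomial (LaurentPolynomial (ZMod (p ^ β))))
          = Polynomial.C (LaurentPolynomial.C ((p ^ β : ℕ) : ZMod (p ^ β))) := by
        rw [map_natCast, map_natCast]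
      rw [h1, h2, ZMod.natCast_self, map_zero, map_zero]
    rw [hE, mul_pow, h0, zero_mul]
  intro k
  have hQfe : Qf = Q ^ p + Δ := by rw [hΔ]; ring
  rw [hQfe, add_pow]
  have hsub : Finset.Icc (k+1) (k+β) ⊆ Finset.range (k+β+1) := by
    intro x hx
    simp only [Finset.mem_Icc] at hx
    simp only [Finset.mem_range]
    omega
  have hzero : ∀ x ∈ Finset.range (k+β+1), x ∉ Finset.Icc (k+1) (k+β) →
      (Q ^ p) ^ x * Δ ^ (k + β - x) *
        ((k+β).choose x : Polynomial (LaurentPolynomial (ZMod (p ^ β)))) = 0 := by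
    intro x hx hx2
    simp only [Finset.mem_range] at hx
    simp only [Finset.mem_Icc, not_and, not_le] at hx2
    have hsp : k + β - x = β + (k - x) := by omega
    rw [hsp, pow_add, hΔβ]; simp
  rw [← Finset.sum_subset hsub hzero, Finset.sum_mul]
  refine Finset.sum_congr rfl ?_
  intro m hm
  simp only [Finset.mem_Icc] at hm
  have hpm : k + 1 ≤ p * m := le_trans hm.1 (Nat.le_mul_of_pos_left m hp.pos)
  have h1 : (Q ^ p) ^ m = Q ^ (p * m - k - 1) * Q ^ (k + 1) := by
    rw [← pow_mul, ← pow_add]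
    congr 1
    omega
  rw [h1]
  ring
end

section
/- Let R be a nonzero element of z⁻¹·(ℤ/p^αℤ)[z] (a Laurent polynomial with min-degree ≥ −1) such that R mod p has min-degree e₀ ∈ {−1, 0} and degree r ≥ 1. Then the coefficient sequence of the Laurent series 1/R^{p^{α−1}} over ℤ/p^αℤ is purely periodic, with period length dividing p^{2(α−1)}·m, where m is the period length of the coefficient sequence of 1/(R mod p) over 𝔽_p. -/
open Polynomial Finset

-- Nat choose divisibility
lemma aux_choose {p : ℕ} (hp : p.Prime) (α k : ℕ) (hα : 1 ≤ α) (h1 : 1 ≤ k)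
    (h2 : k < p ^ (α - 1)) : p ^ α ∣ Nat.choose (p ^ (2 * (α - 1))) k := by
  have hkn : k ≤ p ^ (2 * (α - 1)) := by
    calc k ≤ p ^ (α - 1) := h2.le
    _ ≤ p ^ (2 * (α - 1)) := Nat.pow_le_pow_right hp.pos (by omega)
  have hem := hp.emultiplicity_choose_prime_pow hkn (by omega)
  set v := multiplicity p k with hv
  have hpv : p ^ v ∣ k := pow_multiplicity_dvd p k
  have hle : p ^ v ≤ k := Nat.le_of_dvd (by omega) hpv
  have hvlt : v < α - 1 := by
    by_contra h
    exact absurd (Nat.pow_le_pow_right hp.pos (not_lt.mp h)) (by omega)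
  refine pow_dvd_of_le_emultiplicity ?_
  rw [hem]
  exact_mod_cast Nat.cast_le.mpr (by omega : α ≤ 2 * (α - 1) - v)

-- kernel of reduction map
lemma aux_ker {n q : ℕ} [NeZero n] (hq : q ∣ n) (f : Polynomial (ZMod n))
    (h : f.map (ZMod.castHom hq (ZMod q)) = 0) : (C (q : ZMod n)) ∣ f := by
  rw [C_dvd_iff_dvd_coeff]
  intro i
  have hc : (ZMod.castHom hq (ZMod q)) (f.coeff i) = 0 := by
    rw [← coeff_map, h, coeff_zero]
  set a := f.coeff i
  have ha : ((a.val : ℕ) : ZMod q) = 0 := by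
    rw [ZMod.castHom_apply, ← ZMod.natCast_val] at hc
    exact hc
  obtain ⟨t, ht⟩ := (ZMod.natCast_eq_zero_iff _ _).mp ha
  refine ⟨(t : ZMod n), ?_⟩
  have : ((a.val : ℕ) : ZMod n) = a := by simp [ZMod.natCast_val, ZMod.cast_id]
  rw [← this, ht]
  push_cast
  ring

-- units
lemma aux_unit {p : ℕ} (hp : p.Prime) (α : ℕ) [NeZero (p ^ α)] (hq : p ∣ p ^ α)
    (a : ZMod (p ^ α)) (h : (ZMod.castHom hq (ZMod p)) a ≠ 0) : IsUnit a := by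
  have ha : ((a.val : ℕ) : ZMod p) ≠ 0 := by
    rw [ZMod.castHom_apply, ← ZMod.natCast_val] at h
    exact h
  have hnd : ¬ p ∣ a.val := fun hd => ha ((ZMod.natCast_eq_zero_iff _ _).mpr hd)
  have : IsUnit ((a.val : ℕ) : ZMod (p ^ α)) := by
    rw [ZMod.isUnit_iff_coprime]
    exact (((Nat.Prime.coprime_iff_not_dvd hp).mpr hnd).symm).pow_right _
  rwa [ZMod.natCast_val, ZMod.cast_id] at this

lemma aux_binom {p : ℕ} (hp : p.Prime) (α : ℕ) (hα : 1 ≤ α) [NeZero (p ^ α)] :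
    ∃ D : Polynomial (ZMod (p ^ α)),
      (1 - X) ^ p ^ (α - 1) * D = 1 - X ^ p ^ (2 * (α - 1)) ∧
      D.natDegree ≤ p ^ (2 * (α - 1)) - p ^ (α - 1) := by
  set N := p ^ (α - 1) with hN
  set S := p ^ (2 * (α - 1)) with hS
  have hN1 : 1 ≤ N := Nat.one_le_pow _ _ hp.pos
  have hNS : N ≤ S := Nat.pow_le_pow_right hp.pos (by omega)
  have key : ∀ k ∈ Ico 1 N, ((Nat.choose S k : ZMod (p ^ α))) = 0 := by
    intro k hk
    rw [mem_Ico] at hk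
    rw [ZMod.natCast_eq_zero_iff]
    exact aux_choose hp α k hα hk.1 hk.2
  have expand : (X : Polynomial (ZMod (p ^ α))) ^ S - 1 =
      ∑ k ∈ Ico 1 (S + 1), (X - 1) ^ k * (Nat.choose S k : Polynomial (ZMod (p ^ α))) := by
    have h0 : (X : Polynomial (ZMod (p ^ α))) ^ S = ((X - 1) + 1) ^ S := by ring
    rw [h0, add_pow]
    simp only [one_pow, mul_one]
    rw [range_eq_Ico, Finset.sum_eq_sum_Ico_succ_bot (by omega)]
    simp only [pow_zero, Nat.choose_zero_right, Nat.cast_one, one_mul]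
    ring
  set E : Polynomial (ZMod (p ^ α)) :=
    ∑ k ∈ Ico N (S + 1), (X - 1) ^ (k - N) * (Nat.choose S k : Polynomial (ZMod (p ^ α))) with hE
  have factor : (X : Polynomial (ZMod (p ^ α))) ^ S - 1 = (X - 1) ^ N * E := by
    rw [expand, ← Finset.sum_Ico_consecutive _ (by omega : 1 ≤ N) (by omega : N ≤ S + 1)]
    have hz : ∑ k ∈ Ico 1 N, (X - 1) ^ k * (Nat.choose S k : Polynomial (ZMod (p ^ α))) = 0 := by
      apply Finset.sum_eq_zero
      intro k hk
      have : (Nat.choose S k : Polynomial (ZMod (p ^ α))) = 0 := by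
        rw [← map_natCast (C : ZMod (p ^ α) →+* Polynomial (ZMod (p ^ α)))]
        rw [key k hk]
        exact map_zero _
      rw [this, mul_zero]
    rw [hz, zero_add, hE, Finset.mul_sum]
    apply Finset.sum_congr rfl
    intro k hk
    rw [mem_Ico] at hk
    rw [← mul_assoc, ← pow_add]
    congr 2
    omega
  refine ⟨(-1) ^ (N + 1) * E, ?_, ?_⟩
  · have h1x : ((1 - X : Polynomial (ZMod (p ^ α)))) ^ N = (-1) ^ N * (X - 1) ^ N := by
      rw [← neg_pow, neg_sub]
    rw [h1x]
    have : (-1 : Polynomial (ZMod (p ^ α))) ^ N * (X - 1) ^ N * ((-1) ^ (N + 1) * E) =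
        ((-1) ^ (2 * N + 1)) * ((X - 1) ^ N * E) := by ring
    rw [this, ← factor, pow_succ, pow_mul, neg_one_sq, one_pow, one_mul]
    ring
  · calc ((-1) ^ (N + 1) * E).natDegree ≤ ((-1 : Polynomial (ZMod (p ^ α))) ^ (N + 1)).natDegree
          + E.natDegree := natDegree_mul_le
    _ ≤ 0 + E.natDegree := by
        have : ((-1 : Polynomial (ZMod (p ^ α))) ^ (N + 1)).natDegree ≤ (N + 1) * (-1 :
            Polynomial (ZMod (p ^ α))).natDegree := natDegree_pow_le
        simpa using this
    _ ≤ S - N := by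
        rw [zero_add, hE]
        apply natDegree_sum_le_of_forall_le
        intro k hk
        rw [mem_Ico] at hk
        calc ((X - 1) ^ (k - N) * (Nat.choose S k : Polynomial (ZMod (p ^ α)))).natDegree
            ≤ ((X - 1 : Polynomial (ZMod (p ^ α))) ^ (k - N)).natDegree +
              (Nat.choose S k : Polynomial (ZMod (p ^ α))).natDegree := natDegree_mul_le
        _ ≤ (k - N) * (X - 1 : Polynomial (ZMod (p ^ α))).natDegree + 0 := by
            rw [natDegree_natCast]
            exact add_le_add natDegree_pow_le le_rfl
        _ ≤ (k - N) * 1 + 0 := by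
            have : (X - 1 : Polynomial (ZMod (p ^ α))).natDegree ≤ 1 :=
              le_trans (natDegree_sub_le _ _) (by simp [natDegree_X_le])
            exact add_le_add (Nat.mul_le_mul_left _ this) le_rfl
        _ ≤ S - N := by omega

lemma aux_lift {n q : ℕ} [NeZero n] [NeZero q] (hq : q ∣ n) (f : Polynomial (ZMod q)) :
    ∃ g : Polynomial (ZMod n), g.map (ZMod.castHom hq (ZMod q)) = f ∧
      g.natDegree ≤ f.natDegree := by
  have hsurj : ∀ b : ZMod q, ∃ a : ZMod n, (ZMod.castHom hq (ZMod q)) a = b := by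
    intro b
    refine ⟨((b.val : ℕ) : ZMod n), ?_⟩
    rw [map_natCast, ZMod.natCast_val, ZMod.cast_id]
  have hmem : f ∈ Polynomial.lifts (ZMod.castHom hq (ZMod q)) := by
    rw [Polynomial.lifts_iff_coeff_lifts]
    intro i
    obtain ⟨a, ha⟩ := hsurj (f.coeff i)
    exact ⟨a, ha⟩
  obtain ⟨g, hg, hdeg⟩ := Polynomial.mem_lifts_and_degree_eq hmem
  exact ⟨g, hg, natDegree_le_natDegree (le_of_eq hdeg)⟩

/-- Let `R = T/z` be a nonzero element of `z⁻¹·(ℤ/p^αℤ)[z]` (here `T ∈ (ℤ/p^αℤ)[z]`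
represents `z·R`) such that `R mod p` has min-degree `e₀ ∈ {-1, 0}` (i.e. the
coefficient of `z⁰` or of `z¹` in `T` is a unit) and degree `r ≥ 1`
(i.e. `deg (T mod p) ≥ 2`).  Let `m` be the period length of the coefficient sequence
of `1/(R mod p) = z/(T mod p)` over `𝔽_p`, and let `F = 1/R^{p^{α-1}} =
z^{p^{α-1}}/T^{p^{α-1}}`.  Then the coefficient sequence of `F` is purely periodic
with period length dividing `p^{2(α-1)}·m`. -/
theorem stmt_14 (p : ℕ) [Fact p.Prime] (α : ℕ) (hα : 1 ≤ α)
    (T : Polynomial (ZMod (p ^ α))) (hT : T ≠ 0)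
    (hmin : IsUnit (T.coeff 0) ∨ IsUnit (T.coeff 1))
    (hdeg : 2 ≤ (T.map (ZMod.castHom (dvd_pow_self p (by omega)) (ZMod p))).natDegree)
    (G : PowerSeries (ZMod p))
    (hG : G * ((T.map (ZMod.castHom (dvd_pow_self p (by omega)) (ZMod p)) :
        Polynomial (ZMod p)) : PowerSeries (ZMod p)) = PowerSeries.X)
    (m : ℕ) (hm : 0 < m)
    (hper : ∀ n, PowerSeries.coeff (n + m) G = PowerSeries.coeff n G)
    (hmmin : ∀ m', 0 < m' →
      (∀ n, PowerSeries.coeff (n + m') G = PowerSeries.coeff n G) → m ≤ m')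
    (F : PowerSeries (ZMod (p ^ α)))
    (hF : F * ((T : PowerSeries (ZMod (p ^ α))) ^ p ^ (α - 1)) =
      PowerSeries.X ^ p ^ (α - 1)) :
    ∀ n, PowerSeries.coeff (n + p ^ (2 * (α - 1)) * m) F = PowerSeries.coeff n F := by
  have hp : p.Prime := Fact.out
  haveI : NeZero p := ⟨hp.pos.ne'⟩
  haveI : NeZero (p ^ α) := ⟨pow_ne_zero α hp.pos.ne'⟩
  have hdvd : p ∣ p ^ α := dvd_pow_self p (Nat.one_le_iff_ne_zero.mp hα)
  set φ := ZMod.castHom hdvd (ZMod p) with hφ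
  set N := p ^ (α - 1) with hNdef
  set S := p ^ (2 * (α - 1)) with hSdef
  have hN1 : 1 ≤ N := Nat.one_le_pow _ _ hp.pos
  have hNS : N ≤ S := Nat.pow_le_pow_right hp.pos (by omega)
  set Tb : Polynomial (ZMod p) := T.map φ with hTb
  have hG' : G * (Tb : PowerSeries (ZMod p)) = PowerSeries.X := hG
  -- step 1 : the polynomial q̄ = trunc m ((1 - X^m) G)
  set Sser := (1 - PowerSeries.X ^ m) * G with hSser
  set qb := PowerSeries.trunc m Sser with hqb
  have hcoe : ((qb : Polynomial (ZMod p)) : PowerSeries (ZMod p)) = Sser := by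
    ext k
    rw [Polynomial.coeff_coe, hqb, PowerSeries.coeff_trunc]
    split_ifs with hk
    · rfl
    · push_neg at hk
      rw [hSser, sub_mul, one_mul, map_sub]
      have h1 : PowerSeries.coeff k (PowerSeries.X ^ m * G) =
          PowerSeries.coeff (k - m) G := by
        rw [PowerSeries.coeff_X_pow_mul', if_pos hk]
      rw [h1]
      have h2 : k - m + m = k := by omega
      have := hper (k - m)
      rw [h2] at this
      rw [this, sub_self]
  have hqbdeg : qb.natDegree < m := by
    have h := PowerSeries.natDegree_trunc_lt Sser (m - 1)
    have hmm : m - 1 + 1 = m := by omega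
    rw [hmm] at h
    exact h
  -- polynomial identity over 𝔽_p : qb * Tb = X * (1 - X^m)
  have hpoly : qb * Tb = X * (1 - X ^ m) := by
    have hcast : ((qb * Tb : Polynomial (ZMod p)) : PowerSeries (ZMod p)) =
        ((X * (1 - X ^ m) : Polynomial (ZMod p)) : PowerSeries (ZMod p)) := by
      rw [Polynomial.coe_mul, Polynomial.coe_mul, Polynomial.coe_sub, Polynomial.coe_pow,
        Polynomial.coe_X, Polynomial.coe_one, hcoe, hSser, mul_assoc, hG']
      ring
    exact Polynomial.coe_inj.mp hcast
  -- step 2 : lift qb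
  obtain ⟨Q0, hQ0, hQ0deg⟩ := aux_lift hdvd qb
  -- step 3 : LTE for T * Q0
  have hker1 : (T * Q0 - X * (1 - X ^ m)).map φ = 0 := by
    simp only [Polynomial.map_sub, Polynomial.map_mul, Polynomial.map_pow, Polynomial.map_one,
      Polynomial.map_X]
    rw [← hTb, hQ0, ← hpoly]
    ring
  have hdvd1 : ((p : ℕ) : Polynomial (ZMod (p ^ α))) ∣ T * Q0 - X * (1 - X ^ m) := by
    rw [← Polynomial.C_eq_natCast]
    exact aux_ker hdvd _ hker1
  have hpow1 : (T * Q0) ^ N = (X * (1 - X ^ m)) ^ N := by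
    have h := dvd_sub_pow_of_dvd_sub hdvd1 (α - 1)
    have hz : ((p : Polynomial (ZMod (p ^ α))) ^ (α - 1 + 1)) = 0 := by
      have h1 : α - 1 + 1 = α := by omega
      rw [h1, ← Polynomial.C_eq_natCast, ← map_pow]
      have : ((p : ZMod (p ^ α))) ^ α = ((p ^ α : ℕ) : ZMod (p ^ α)) := by push_cast; ring
      rw [this, ZMod.natCast_self, map_zero]
    rw [hz, zero_dvd_iff, sub_eq_zero] at h
    exact h
  -- step 4 : binomial divisor
  obtain ⟨D, hD, hDdeg⟩ := aux_binom hp α hα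
  set Dm := D.comp (X ^ m) with hDm
  have hDmEq : (1 - X ^ m : Polynomial (ZMod (p ^ α))) ^ N * Dm = 1 - X ^ (S * m) := by
    have h := congrArg (fun f : Polynomial (ZMod (p ^ α)) => f.comp (X ^ m)) hD
    simp only [mul_comp, pow_comp, sub_comp, one_comp, X_comp] at h
    rw [hDm]
    rw [h, ← pow_mul, mul_comm m S]
  -- step 5 : main polynomial identity over ZMod (p^α)
  set Q := Q0 ^ N * Dm with hQ
  have hQmain : T ^ N * Q = X ^ N * (1 - X ^ (S * m)) := by
    calc T ^ N * Q = (T * Q0) ^ N * Dm := by rw [hQ, mul_pow]; ring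
    _ = (X * (1 - X ^ m)) ^ N * Dm := by rw [hpow1]
    _ = X ^ N * ((1 - X ^ m) ^ N * Dm) := by rw [mul_pow]; ring
    _ = X ^ N * (1 - X ^ (S * m)) := by rw [hDmEq]
  have hQdeg : Q.natDegree < S * m := by
    have h1 : (Q0 ^ N).natDegree ≤ N * (m - 1) :=
      le_trans natDegree_pow_le (Nat.mul_le_mul_left _ (by omega))
    have h2 : Dm.natDegree ≤ (S - N) * m := by
      refine le_trans natDegree_comp_le ?_
      have : (X ^ m : Polynomial (ZMod (p ^ α))).natDegree ≤ m := natDegree_X_pow_le m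
      exact Nat.mul_le_mul hDdeg this
    have h3 : Q.natDegree ≤ N * (m - 1) + (S - N) * m :=
      le_trans natDegree_mul_le (add_le_add h1 h2)
    have e1 : N * (m - 1) = N * m - N := by rw [Nat.mul_sub]; ring_nf
    have e2 : (S - N) * m = S * m - N * m := by rw [Nat.sub_mul]
    have e3 : N ≤ N * m := Nat.le_mul_of_pos_right N hm
    have e4 : N * m ≤ S * m := Nat.mul_le_mul_right m hNS
    rw [e1, e2] at h3
    set A := N * m
    set B := S * m
    omega
  -- step 6 : cast to power series
  have hPS : (Q : PowerSeries (ZMod (p ^ α))) * ((T : PowerSeries (ZMod (p ^ α))) ^ N) =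
      PowerSeries.X ^ N * (1 - PowerSeries.X ^ (S * m)) := by
    have h := congrArg (fun f : Polynomial (ZMod (p ^ α)) =>
      (f : PowerSeries (ZMod (p ^ α)))) hQmain
    push_cast [Polynomial.coe_mul, Polynomial.coe_sub, Polynomial.coe_pow, Polynomial.coe_X,
      Polynomial.coe_one] at h
    rw [← h]
    ring
  -- step 7 : decomposition Tb = X^e * ub
  obtain ⟨e, ub, hub, hub0⟩ :
      ∃ (e : ℕ) (ub : Polynomial (ZMod p)), Tb = X ^ e * ub ∧ ub.coeff 0 ≠ 0 := by
    by_cases h0 : Tb.coeff 0 = 0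
    · have hXdvd : X ∣ Tb := X_dvd_iff.mpr h0
      obtain ⟨ub, hub⟩ := hXdvd
      have hu1 : IsUnit (T.coeff 1) := by
        rcases hmin with h | h
        · exfalso
          have : IsUnit (φ (T.coeff 0)) := h.map φ
          rw [show φ (T.coeff 0) = Tb.coeff 0 from (Polynomial.coeff_map φ 0).symm, h0] at this
          exact this.ne_zero rfl
        · exact h
      refine ⟨1, ub, by rw [pow_one, hub], ?_⟩
      have h1 : Tb.coeff 1 = ub.coeff 0 := by
        rw [hub]
        exact Polynomial.coeff_X_mul ub 0
      have h2 : Tb.coeff 1 ≠ 0 := by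
        rw [hTb, Polynomial.coeff_map]
        have : IsUnit (φ (T.coeff 1)) := hu1.map φ
        exact this.ne_zero
      rw [← h1]; exact h2
    · exact ⟨0, Tb, by rw [pow_zero, one_mul], h0⟩
  obtain ⟨U, hU, -⟩ := aux_lift hdvd ub
  have hUunit : IsUnit (U.coeff 0) := by
    apply aux_unit hp α hdvd
    rw [show φ (U.coeff 0) = (U.map φ).coeff 0 from (Polynomial.coeff_map φ 0).symm, hU]
    exact hub0
  -- LTE for T vs X^e * U
  have hker2 : (T - X ^ e * U).map φ = 0 := by
    simp only [Polynomial.map_sub, Polynomial.map_mul, Polynomial.map_pow, Polynomial.map_X]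
    rw [← hTb, hU, hub]
    ring
  have hdvd2 : ((p : ℕ) : Polynomial (ZMod (p ^ α))) ∣ T - X ^ e * U := by
    rw [← Polynomial.C_eq_natCast]
    exact aux_ker hdvd _ hker2
  have hpow2 : T ^ N = X ^ (e * N) * U ^ N := by
    have h := dvd_sub_pow_of_dvd_sub hdvd2 (α - 1)
    have hz : ((p : Polynomial (ZMod (p ^ α))) ^ (α - 1 + 1)) = 0 := by
      have h1 : α - 1 + 1 = α := by omega
      rw [h1, ← Polynomial.C_eq_natCast, ← map_pow]
      have : ((p : ZMod (p ^ α))) ^ α = ((p ^ α : ℕ) : ZMod (p ^ α)) := by push_cast; ring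
      rw [this, ZMod.natCast_self, map_zero]
    rw [hz, zero_dvd_iff, sub_eq_zero] at h
    rw [h, mul_pow, ← pow_mul]
  -- step 8 : power series cancellation
  set V : PowerSeries (ZMod (p ^ α)) := (U : PowerSeries (ZMod (p ^ α))) ^ N with hV
  have hVunit : IsUnit V := by
    apply PowerSeries.isUnit_iff_constantCoeff.mpr
    rw [hV, map_pow, Polynomial.constantCoeff_coe]
    exact hUunit.pow N
  have hTN : (T : PowerSeries (ZMod (p ^ α))) ^ N =
      PowerSeries.X ^ (e * N) * V := by
    have h := congrArg (fun f : Polynomial (ZMod (p ^ α)) =>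
      (f : PowerSeries (ZMod (p ^ α)))) hpow2
    simp only [Polynomial.coe_mul, Polynomial.coe_pow, Polynomial.coe_X] at h
    rw [hV]
    exact h
  have hfin : F * (1 - PowerSeries.X ^ (S * m)) = (Q : PowerSeries (ZMod (p ^ α))) := by
    have key : (F * (1 - PowerSeries.X ^ (S * m))) * (PowerSeries.X ^ (e * N) * V) =
        (Q : PowerSeries (ZMod (p ^ α))) * (PowerSeries.X ^ (e * N) * V) := by
      calc (F * (1 - PowerSeries.X ^ (S * m))) * (PowerSeries.X ^ (e * N) * V)
          = (F * ((T : PowerSeries (ZMod (p ^ α))) ^ N)) * (1 - PowerSeries.X ^ (S * m)) := by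
            rw [hTN]; ring
        _ = PowerSeries.X ^ N * (1 - PowerSeries.X ^ (S * m)) := by rw [hF]
        _ = (Q : PowerSeries (ZMod (p ^ α))) * ((T : PowerSeries (ZMod (p ^ α))) ^ N) := hPS.symm
        _ = (Q : PowerSeries (ZMod (p ^ α))) * (PowerSeries.X ^ (e * N) * V) := by rw [hTN]
    -- cancel V then X^(e*N)
    have key1 : V * ((F * (1 - PowerSeries.X ^ (S * m))) * PowerSeries.X ^ (e * N)) =
        V * ((Q : PowerSeries (ZMod (p ^ α))) * PowerSeries.X ^ (e * N)) := by
      linear_combination key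
    have key2 : (F * (1 - PowerSeries.X ^ (S * m))) * PowerSeries.X ^ (e * N) =
        (Q : PowerSeries (ZMod (p ^ α))) * PowerSeries.X ^ (e * N) :=
      hVunit.mul_left_cancel key1
    ext k
    have := congrArg (PowerSeries.coeff (k + e * N)) key2
    rwa [PowerSeries.coeff_mul_X_pow, PowerSeries.coeff_mul_X_pow] at this
  -- step 9 : conclude
  intro n
  have h := congrArg (PowerSeries.coeff (n + S * m)) hfin
  rw [mul_sub, mul_one, map_sub, Polynomial.coeff_coe] at h
  have hx : PowerSeries.coeff (n + S * m) (F * PowerSeries.X ^ (S * m)) =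
      PowerSeries.coeff n F := PowerSeries.coeff_mul_X_pow F (S * m) n
  rw [hx] at h
  have hq0 : Q.coeff (n + S * m) = 0 :=
    Polynomial.coeff_eq_zero_of_natDegree_lt (lt_of_lt_of_le hQdeg (Nat.le_add_left _ _))
  rw [hq0, sub_eq_zero] at h
  exact h
end

section
/- Let a(n) be the coefficient sequence of the power series 1/R over 𝔽_p where R ∈ 𝔽_p[z] has nonzero constant term and degree ≥ 1, and suppose R factors as c·R₁^{e₁}⋯R_k^{e_k} into monic irreducibles. Set L = lcm_i(p^{deg R_i} − 1) and e = max_i e_i. Then a(n) is purely periodic with period length dividing p^{⌈log_p e⌉}·L. -/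
open Polynomial

private lemma stmt18_aux_dvd {p : ℕ} (a b : ℕ) (h : a ∣ b) :
    (X ^ a - 1 : Polynomial (ZMod p)) ∣ X ^ b - 1 := by
  obtain ⟨c, rfl⟩ := h
  simpa [pow_mul] using sub_dvd_pow_sub_pow ((X : Polynomial (ZMod p)) ^ a) 1 c

/-- Let `R ∈ 𝔽_p[z]` with `R(0) ≠ 0` and `deg R ≥ 1`, factored as
`R = C c * ∏ Rᵢ^{eᵢ}` into distinct monic irreducibles.  Let
`L = lcm_i (p^{deg Rᵢ} - 1)` and `e = max_i eᵢ`.  Then the coefficient sequence of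
`1/R` is purely periodic with period length dividing `p^⌈log_p e⌉ * L`. -/
theorem stmt_18 (p : ℕ) [Fact p.Prime]
    (R : Polynomial (ZMod p)) (hR0 : R.coeff 0 ≠ 0) (hRdeg : 1 ≤ R.natDegree)
    (k : ℕ) (hk : 1 ≤ k) (c : ZMod p)
    (Ri : Fin k → Polynomial (ZMod p)) (ei : Fin k → ℕ)
    (hmonic : ∀ i, (Ri i).Monic) (hirr : ∀ i, Irreducible (Ri i))
    (hdist : Function.Injective Ri) (hei : ∀ i, 1 ≤ ei i)
    (hfact : R = Polynomial.C c * ∏ i, Ri i ^ ei i)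
    (F : PowerSeries (ZMod p)) (hF : F * (R : PowerSeries (ZMod p)) = 1)
    (a : ℕ → ZMod p) (ha : ∀ n, a n = PowerSeries.coeff n F)
    (L e : ℕ) (hL : L = Finset.univ.lcm (fun i : Fin k => p ^ (Ri i).natDegree - 1))
    (he : e = Finset.univ.sup ei) :
    ∀ n, a (n + p ^ Nat.clog p e * L) = a n := by
  intro n
  have hp : p.Prime := Fact.out
  set t := Nat.clog p e with ht
  set N := p ^ t * L with hN
  -- each Ri has nonzero constant coefficient
  have hRi0 : ∀ i, (Ri i).coeff 0 ≠ 0 := by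
    intro i hi0
    apply hR0
    rw [coeff_zero_eq_eval_zero] at hi0 ⊢
    rw [hfact, eval_mul, eval_prod, Finset.prod_eq_zero (Finset.mem_univ i)
      (by rw [eval_pow, hi0, zero_pow (by have := hei i; omega)]), mul_zero]
  -- key divisibility for each i
  have key : ∀ i, Ri i ^ ei i ∣ (X : Polynomial (ZMod p)) ^ N - 1 := by
    intro i
    haveI := Fact.mk (hirr i)
    have hf0 : Ri i ≠ 0 := (hirr i).ne_zero
    let pb := AdjoinRoot.powerBasis hf0
    letI : Fintype (AdjoinRoot (Ri i)) := Module.fintypeOfFintype pb.basis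
    have hcard : Fintype.card (AdjoinRoot (Ri i)) = p ^ (Ri i).natDegree := by
      rw [Module.card_fintype pb.basis, ZMod.card, Fintype.card_fin,
        AdjoinRoot.powerBasis_dim]
    have haeval : Polynomial.aeval (AdjoinRoot.root (Ri i)) (Ri i) = 0 := by
      rw [AdjoinRoot.aeval_eq, AdjoinRoot.mk_self]
    have hroot : (AdjoinRoot.root (Ri i)) ≠ 0 := by
      intro h
      rw [h, aeval_def, eval₂_at_zero] at haeval
      exact hRi0 i ((map_eq_zero_iff _ (RingHom.injective _)).mp haeval)
    have hfd : Ri i ∣ X ^ (p ^ (Ri i).natDegree - 1) - 1 := by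
      rw [← AdjoinRoot.mk_eq_zero, map_sub, map_pow, map_one, AdjoinRoot.mk_X,
        sub_eq_zero, ← hcard]
      exact FiniteField.pow_card_sub_one_eq_one _ hroot
    have hdvdL : Ri i ∣ (X : Polynomial (ZMod p)) ^ L - 1 :=
      hfd.trans (stmt18_aux_dvd _ _ (hL ▸ Finset.dvd_lcm (Finset.mem_univ i)))
    have heit : ei i ≤ p ^ t := by
      refine le_trans ?_ (Nat.le_pow_clog hp.one_lt e)
      rw [he]; exact Finset.le_sup (Finset.mem_univ i)
    calc Ri i ^ ei i ∣ ((X : Polynomial (ZMod p)) ^ L - 1) ^ ei i :=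
          pow_dvd_pow_of_dvd hdvdL _
      _ ∣ ((X : Polynomial (ZMod p)) ^ L - 1) ^ p ^ t := pow_dvd_pow _ heit
      _ = (X : Polynomial (ZMod p)) ^ N - 1 := by
          rw [sub_pow_char_pow, one_pow, ← pow_mul, hN, mul_comm L]
  -- pairwise coprime
  have hcop : Set.Pairwise ↑(Finset.univ : Finset (Fin k))
      (Function.onFun IsCoprime fun i => Ri i ^ ei i) := by
    intro i _ j _ hij
    have h1 : ¬ Ri i ∣ Ri j := fun hd => hij (hdist
      (Polynomial.eq_of_monic_of_associated (hmonic i) (hmonic j)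
        ((hirr i).associated_of_dvd (hirr j) hd)))
    exact (((hirr i).coprime_iff_not_dvd).2 h1).pow
  have hprod : (∏ i, Ri i ^ ei i) ∣ (X : Polynomial (ZMod p)) ^ N - 1 :=
    Finset.prod_dvd_of_coprime hcop fun i _ => key i
  have hc : c ≠ 0 := by
    intro h
    apply hR0
    rw [hfact, h]
    simp
  have hRdvd : R ∣ (X : Polynomial (ZMod p)) ^ N - 1 := by
    rw [hfact]
    exact (isUnit_C.mpr (isUnit_iff_ne_zero.mpr hc)).mul_left_dvd.mpr hprod
  -- N ≥ 1
  have hL0 : L ≠ 0 := by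
    rw [hL, Ne, Finset.lcm_eq_zero_iff]
    rintro ⟨i, -, hi⟩
    have : 1 < p ^ (Ri i).natDegree :=
      Nat.one_lt_pow (hirr i).natDegree_pos.ne' hp.one_lt
    omega
  have hNpos : 0 < N := Nat.mul_pos (Nat.pow_pos hp.pos) (Nat.pos_of_ne_zero hL0)
  obtain ⟨S, hS⟩ := hRdvd
  have hdeg : ((X : Polynomial (ZMod p)) ^ N - 1).natDegree = N := by
    simpa using (natDegree_X_pow_sub_C (n := N) (r := (1 : ZMod p)))
  have hXn : ((X : Polynomial (ZMod p)) ^ N - 1) ≠ 0 := by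
    intro h
    rw [h, natDegree_zero] at hdeg
    omega
  have hR0' : R ≠ 0 := fun h => hR0 (by simp [h])
  have hS0 : S ≠ 0 := fun h => hXn (by rw [hS, h, mul_zero])
  have hdegS : S.natDegree < N := by
    have hmul := natDegree_mul hR0' hS0
    rw [← hS, hdeg] at hmul
    omega
  -- pass to power series
  have hsub : (((X : Polynomial (ZMod p)) ^ N - 1 : Polynomial (ZMod p)) :
      PowerSeries (ZMod p)) = PowerSeries.X ^ N - 1 := by
    rw [← Polynomial.coeToPowerSeries.ringHom_apply, map_sub, map_pow, map_one,
      Polynomial.coeToPowerSeries.ringHom_apply, Polynomial.coe_X]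
  have hps : F * PowerSeries.X ^ N - F = (S : PowerSeries (ZMod p)) := by
    have : F * (((X : Polynomial (ZMod p)) ^ N - 1 : Polynomial (ZMod p)) :
        PowerSeries (ZMod p)) = (S : PowerSeries (ZMod p)) := by
      rw [hS, Polynomial.coe_mul, ← mul_assoc, hF, one_mul]
    rw [hsub, mul_sub, mul_one] at this
    exact this
  have hcoef := congrArg (PowerSeries.coeff (n + N)) hps
  rw [map_sub, PowerSeries.coeff_mul_X_pow, Polynomial.coeff_coe,
    Polynomial.coeff_eq_zero_of_natDegree_lt
      (lt_of_lt_of_le hdegS (Nat.le_add_left N n))] at hcoef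
  rw [ha, ha]
  exact (sub_eq_zero.mp hcoef).symm
end

section
/- The sequence n ↦ C(n, j) mod p (binomial coefficient, n ranging over nonnegative integers, fixed j ≥ 1) is periodic with period length p^{⌊log_p j⌋ + 1}; in particular it is periodic with period length dividing p^{⌈log_p(j+1)⌉} whenever j ≥ 1. -/
private lemma zabek_period (p : ℕ) [Fact p.Prime] : ∀ e j n : ℕ, j < p ^ e →
    ((n + p ^ e).choose j : ZMod p) = (n.choose j : ZMod p)
  | 0, j, n, h => by
    have hj0 : j = 0 := by simpa using h
    subst hj0
    simp
  | e + 1, j, n, h => by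
    have hp : 0 < p := (Fact.out : p.Prime).pos
    have h1 := (ZMod.natCast_eq_natCast_iff _ _ _).mpr
      (Choose.choose_modEq_choose_mod_mul_choose_div_nat (p := p) (n := n + p ^ (e + 1)) (k := j))
    have h2 := (ZMod.natCast_eq_natCast_iff _ _ _).mpr
      (Choose.choose_modEq_choose_mod_mul_choose_div_nat (p := p) (n := n) (k := j))
    rw [pow_succ] at h h1 ⊢
    rw [Nat.add_mul_mod_self_right, Nat.add_mul_div_right _ _ hp] at h1
    have hj : j / p < p ^ e := (Nat.div_lt_iff_lt_mul hp).mpr h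
    push_cast at h1 h2
    rw [h1, h2, zabek_period p e (j / p) (n / p) hj]

private lemma zabek_iter {p : ℕ} (f : ℕ → ZMod p) {m : ℕ}
    (hm : ∀ n, f (n + m) = f n) : ∀ k n, f (n + k * m) = f n := by
  intro k
  induction k with
  | zero => simp
  | succ k ih =>
    intro n
    have : n + (k + 1) * m = (n + k * m) + m := by ring
    rw [this, hm, ih]

/-- Zabek's theorem: for fixed `j ≥ 1`, the sequence `n ↦ C(n, j) mod p` is periodic
with minimal period length `p ^ (⌊log_p j⌋ + 1)`; in particular it is periodic with
period length dividing `p ^ ⌈log_p (j + 1)⌉`. -/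
theorem stmt_19 (p : ℕ) [Fact p.Prime] (j : ℕ) (hj : 1 ≤ j) :
    (∀ n : ℕ, ((n + p ^ (Nat.log p j + 1)).choose j : ZMod p) = (n.choose j : ZMod p)) ∧
    (∀ m : ℕ, 0 < m → (∀ n : ℕ, ((n + m).choose j : ZMod p) = (n.choose j : ZMod p)) →
      p ^ (Nat.log p j + 1) ≤ m) ∧
    p ^ (Nat.log p j + 1) ∣ p ^ Nat.clog p (j + 1) := by
  have hp : p.Prime := Fact.out
  have hp1 : 1 < p := hp.one_lt
  set e := Nat.log p j + 1 with he
  have hje : j < p ^ e := Nat.lt_pow_succ_log_self hp1 j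
  have hper : ∀ n : ℕ, ((n + p ^ e).choose j : ZMod p) = (n.choose j : ZMod p) :=
    fun n => zabek_period p e j n hje
  refine ⟨hper, ?_, ?_⟩
  · intro m hm hmper
    by_contra hlt
    push_neg at hlt
    set g := Nat.gcd m (p ^ e) with hg
    have hg0 : 0 < g := Nat.gcd_pos_of_pos_left _ hm
    have hgdvd : g ∣ p ^ e := Nat.gcd_dvd_right _ _
    have hgm : g ≤ m := Nat.le_of_dvd hm (Nat.gcd_dvd_left _ _)
    -- Bezout: find x y : ℕ with x * m = g + y * p ^ e
    obtain ⟨x, y, hxy⟩ : ∃ x y : ℕ, x * m = g + y * p ^ e := by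
      obtain ⟨x, -, hx⟩ := Nat.exists_mul_mod_eq_gcd (lt_of_le_of_lt hgm hlt)
      refine ⟨x, m * x / p ^ e, ?_⟩
      have h2 : m * x = p ^ e * (m * x / p ^ e) + g := by
        conv_lhs => rw [← Nat.div_add_mod (m * x) (p ^ e)]
        rw [hx]
      rw [mul_comm x m]
      conv_lhs => rw [h2]
      ring
    -- g is a period
    have hgper : ∀ n : ℕ, ((n + g).choose j : ZMod p) = (n.choose j : ZMod p) := by
      intro n
      have h1 := zabek_iter (fun n => ((n.choose j : ZMod p))) hper y (n + g)
      have h2 := zabek_iter (fun n => ((n.choose j : ZMod p))) hmper x n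
      have : n + g + y * p ^ e = n + x * m := by omega
      rw [← h1, this, h2]
    -- g ≤ j
    have hgj : g ≤ j := by
      obtain ⟨i, hi, hgi⟩ := (Nat.dvd_prime_pow hp).mp hgdvd
      have hilog : i ≤ Nat.log p j := by
        by_contra hc
        push_neg at hc
        have h3 : p ^ e ≤ p ^ i := Nat.pow_le_pow_right hp.one_lt.le (by omega)
        have h4 : g < p ^ e := lt_of_le_of_lt hgm hlt
        omega
      calc g = p ^ i := hgi
        _ ≤ p ^ Nat.log p j := Nat.pow_le_pow_right hp.one_lt.le hilog
        _ ≤ j := Nat.pow_log_le_self p (by omega)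
    -- contradiction
    have h1 := hgper (j - g)
    rw [Nat.sub_add_cancel hgj, Nat.choose_self,
      Nat.choose_eq_zero_of_lt (by omega : j - g < j)] at h1
    exact one_ne_zero (by exact_mod_cast h1)
  · apply pow_dvd_pow
    have h1 : p ^ Nat.log p j ≤ j := Nat.pow_log_le_self p (by omega)
    have h2 : j + 1 ≤ p ^ Nat.clog p (j + 1) := Nat.le_pow_clog hp1 _
    have : p ^ Nat.log p j < p ^ Nat.clog p (j + 1) := by omega
    have := (Nat.pow_lt_pow_iff_right hp1).mp this
    omega
end
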